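/- arXiv:2105.10388 — 7 statements merged into one kernel-verified Lean document; each statement's English description precedes it below -/
import Mathlib

section
/- A set S = {s_1 < s_2 < ... < s_d} of positive integers is an admissible pinnacle set (i.e., S = Pin(π) for some permutation π of [n] for some n) if and only if s_i > 2i for all i in [d]. -/
lemma sortGetD_mem (S : Finset ℕ) {j : ℕ} (hj : j < (S.sort (· ≤ ·)).length) :
    (S.sort (· ≤ ·)).getD j 0 ∈ S := by
  rw [List.getD_eq_getElem _ _ hj]
  exact (Finset.mem_sort _).1 (List.getElem_mem _)

lemma sortGetD_strictMono (S : Finset ℕ) {i j : ℕ} (hij : i < j)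
    (hj : j < (S.sort (· ≤ ·)).length) :
    (S.sort (· ≤ ·)).getD i 0 < (S.sort (· ≤ ·)).getD j 0 := by
  rw [List.getD_eq_getElem _ _ hj, List.getD_eq_getElem _ _ (hij.trans hj)]
  exact List.Pairwise.rel_get_of_lt S.sortedLT_sort.pairwise (show (⟨i, _⟩ : Fin _) < ⟨j, _⟩ from hij)

lemma mem_iff_sortGetD (S : Finset ℕ) (t : ℕ) :
    t ∈ S ↔ ∃ j, ∃ _ : j < (S.sort (· ≤ ·)).length, (S.sort (· ≤ ·)).getD j 0 = t := by
  rw [← Finset.mem_sort (· ≤ ·), List.mem_iff_getElem]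
  constructor
  · rintro ⟨j, hj, rfl⟩; exact ⟨j, hj, List.getD_eq_getElem _ _ hj⟩
  · rintro ⟨j, hj, h⟩; exact ⟨j, hj, by rw [← List.getD_eq_getElem _ _ hj, h]⟩

lemma filter_lt_sortGetD_card (S : Finset ℕ) {j : ℕ} (hj : j < (S.sort (· ≤ ·)).length) :
    (S.filter (· < (S.sort (· ≤ ·)).getD j 0)).card = j := by
  have heq : S.filter (· < (S.sort (· ≤ ·)).getD j 0)
      = (Finset.range j).image (fun m => (S.sort (· ≤ ·)).getD m 0) := by
    ext t
    simp only [Finset.mem_filter, Finset.mem_image, Finset.mem_range]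
    constructor
    · rintro ⟨ht, hlt⟩
      obtain ⟨m, hm, rfl⟩ := (mem_iff_sortGetD S t).1 ht
      refine ⟨m, ?_, rfl⟩
      by_contra hmj
      rcases (not_lt.1 hmj).lt_or_eq with h' | h'
      · exact absurd (sortGetD_strictMono S h' hm) (not_lt.2 hlt.le)
      · rw [h'] at hlt; exact absurd hlt (lt_irrefl _)
    · rintro ⟨m, hm, rfl⟩
      exact ⟨sortGetD_mem S (hm.trans hj), sortGetD_strictMono S hm hj⟩
  rw [heq, Finset.card_image_of_injOn, Finset.card_range]
  intro x hx y hy hxy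
  by_contra hne
  rcases Ne.lt_or_gt hne with h' | h'
  · exact absurd hxy (ne_of_lt (sortGetD_strictMono S h' ((Finset.mem_range.1 hy).trans hj)))
  · exact absurd hxy.symm (ne_of_lt (sortGetD_strictMono S h' ((Finset.mem_range.1 hx).trans hj)))


/-- The pinnacle set of a permutation of `[n]` (values in `{1,...,n}`, where the
permutation is `i ↦ (π i).val + 1` in one-line notation). -/
def pinSet (n : ℕ) (π : Equiv.Perm (Fin n)) : Finset ℕ :=
  Finset.image (fun i => (π i).val + 1) <| Finset.univ.filter fun i : Fin n =>
    0 < i.val ∧ i.val + 1 < n ∧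
    (∀ j : Fin n, j.val + 1 = i.val → π j < π i) ∧
    (∀ j : Fin n, j.val = i.val + 1 → π j < π i)

section Fwd
variable {n : ℕ} (π : Equiv.Perm (Fin n))

/-- one-line word, as ℕ-valued function on ℕ positions -/
noncomputable def gN (p : ℕ) : ℕ := if h : p < n then (π ⟨p, h⟩).val + 1 else 0

lemma gN_inj {p q : ℕ} (hp : p < n) (hq : q < n) (h : gN π p = gN π q) : p = q := by
  rw [gN, gN, dif_pos hp, dif_pos hq] at h
  have := π.injective (Fin.val_injective (Nat.succ_injective h))
  exact congrArg Fin.val this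

lemma gN_pos {p : ℕ} (hp : p < n) : 1 ≤ gN π p := by
  rw [gN, dif_pos hp]; omega

lemma gN_le {p : ℕ} (hp : p < n) : gN π p ≤ n := by
  rw [gN, dif_pos hp]; exact (π _).isLt

/-- positions with small values -/
noncomputable def VN (s : ℕ) : Finset ℕ := (Finset.range n).filter (fun p => gN π p ≤ s)

lemma VN_card {s : ℕ} (hs : s ≤ n) : (VN π s).card = s := by
  have himg : (VN π s).image (gN π) = Finset.Icc 1 s := by
    ext v
    simp only [Finset.mem_image, VN, Finset.mem_filter, Finset.mem_range, Finset.mem_Icc]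
    constructor
    · rintro ⟨p, ⟨hp, hle⟩, rfl⟩
      exact ⟨gN_pos π hp, hle⟩
    · rintro ⟨h1, h2⟩
      have hv : v - 1 < n := by omega
      have hgv : gN π (π.symm ⟨v - 1, hv⟩).val = v := by
        rw [gN, dif_pos (π.symm ⟨v - 1, hv⟩).isLt]
        rw [show (⟨(π.symm ⟨v-1,hv⟩).val, (π.symm ⟨v-1,hv⟩).isLt⟩ : Fin n) = π.symm ⟨v-1,hv⟩
            from Fin.eta ..]
        rw [Equiv.apply_symm_apply]
        show v - 1 + 1 = v
        omega
      exact ⟨(π.symm ⟨v - 1, hv⟩).val, ⟨(π.symm _).isLt, by rw [hgv]; exact h2⟩, hgv⟩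
  have hinj : Set.InjOn (gN π) (VN π s) := by
    intro p hp q hq h
    simp only [VN, Finset.coe_filter, Set.mem_setOf_eq, Finset.mem_range] at hp hq
    exact gN_inj π hp.1 hq.1 h
  rw [← Finset.card_image_of_injOn hinj, himg, Nat.card_Icc]; omega

end Fwd

lemma forward_dir (S : Finset ℕ) (n : ℕ) (π : Equiv.Perm (Fin n)) (hpin : pinSet n π = S)
    (i : ℕ) (h : i < (S.sort (· ≤ ·)).length) :
    2 * (i + 1) < (S.sort (· ≤ ·)).get ⟨i, h⟩ := by
  set L := S.sort (· ≤ ·) with hL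
  set s := L.get ⟨i, h⟩ with hs
  -- s ∈ S
  have hsmem : s ∈ S := by
    rw [← Finset.mem_sort (· ≤ ·)]; exact L.get_mem _
  -- s ≤ n and positions
  have hval : ∀ p : Fin n, (π p).val + 1 ≤ n := fun p => (π p).isLt
  have hsn : s ≤ n := by
    rw [← hpin] at hsmem
    simp only [pinSet, Finset.mem_image] at hsmem
    obtain ⟨p, -, hp⟩ := hsmem
    exact hp ▸ hval p
  set k := (S.filter (· ≤ s)).card with hk
  -- step 1 : i + 1 ≤ k
  have hstep1 : i + 1 ≤ k := by
    have hsub : (Finset.range (i+1)).image (fun m => L.getD m 0) ⊆ S.filter (· ≤ s) := by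
      intro t ht
      simp only [Finset.mem_image, Finset.mem_range] at ht
      obtain ⟨m, hm, rfl⟩ := ht
      have hmlen : m < L.length := lt_of_lt_of_le hm h
      refine Finset.mem_filter.2 ⟨sortGetD_mem S hmlen, ?_⟩
      rcases Nat.lt_or_ge m i with h' | h'
      · have := sortGetD_strictMono S h' h
        rw [List.getD_eq_getElem _ _ h] at this
        exact this.le.trans (by rw [hs, List.get_eq_getElem])
      · have : m = i := by omega
        subst this
        rw [List.getD_eq_getElem _ _ h, hs, List.get_eq_getElem]
    have hcard : ((Finset.range (i+1)).image (fun m => L.getD m 0)).card = i + 1 := by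
      rw [Finset.card_image_of_injOn, Finset.card_range]
      intro x hx y hy hxy
      simp only [Finset.coe_range, Set.mem_Iio] at hx hy
      by_contra hne
      rcases Ne.lt_or_gt hne with h' | h'
      · exact absurd hxy (ne_of_lt (sortGetD_strictMono S h' (lt_of_lt_of_le hy h)))
      · exact absurd hxy.symm (ne_of_lt (sortGetD_strictMono S h' (lt_of_lt_of_le hx h)))
    calc i + 1 = _ := hcard.symm
    _ ≤ k := Finset.card_le_card hsub
  -- step 2 : 2 * k + 1 ≤ s
  classical
  have gN_val : ∀ p : Fin n, gN π p.val = (π p).val + 1 := by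
    intro p; rw [gN, dif_pos p.isLt, Fin.eta]
  set Pfin := Finset.univ.filter (fun p : Fin n =>
      (0 < p.val ∧ p.val + 1 < n ∧
       (∀ j : Fin n, j.val + 1 = p.val → π j < π p) ∧
       (∀ j : Fin n, j.val = p.val + 1 → π j < π p)) ∧ (π p).val + 1 ≤ s) with hPfin
  have hPfincard : Pfin.card = k := by
    have himg : Pfin.image (fun p => (π p).val + 1) = S.filter (· ≤ s) := by
      rw [← hpin]
      ext v
      simp only [hPfin, pinSet, Finset.mem_image, Finset.mem_filter, Finset.mem_univ, true_and]
      constructor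
      · rintro ⟨p, ⟨hc, hle⟩, rfl⟩; exact ⟨⟨p, hc, rfl⟩, hle⟩
      · rintro ⟨⟨p, hc, rfl⟩, hle⟩; exact ⟨p, ⟨hc, hle⟩, rfl⟩
    rw [hk, ← himg, Finset.card_image_of_injOn]
    intro p _ q _ hpq
    exact π.injective (Fin.val_injective (Nat.succ_injective hpq))
  set P := Pfin.image Fin.val with hPdef
  have hPcard : P.card = k := by
    rw [hPdef, Finset.card_image_of_injective _ Fin.val_injective, hPfincard]
  have hPprop : ∀ p ∈ P, 0 < p ∧ p + 1 < n ∧ gN π (p-1) < gN π p ∧ gN π (p+1) < gN π p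
      ∧ gN π p ≤ s := by
    intro p hp
    obtain ⟨pf, hpf, rfl⟩ := Finset.mem_image.1 hp
    obtain ⟨⟨h0, h1, hleft, hright⟩, hle⟩ := (Finset.mem_filter.1 hpf).2
    refine ⟨h0, h1, ?_, ?_, by rw [gN_val]; exact hle⟩
    · have hlt : pf.val - 1 < n := by omega
      have hj := hleft ⟨pf.val - 1, hlt⟩ (by simp only [Fin.val_mk]; omega)
      rw [gN_val pf, gN, dif_pos hlt]
      have := Fin.lt_def.1 hj
      omega
    · have hlt : pf.val + 1 < n := h1
      have hj := hright ⟨pf.val + 1, hlt⟩ rfl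
      rw [gN_val pf, gN, dif_pos hlt]
      have := Fin.lt_def.1 hj
      omega
  have hPne : P.Nonempty := by
    rw [← hpin] at hsmem
    simp only [pinSet, Finset.mem_image, Finset.mem_filter, Finset.mem_univ, true_and] at hsmem
    obtain ⟨p, hc, hps⟩ := hsmem
    exact ⟨p.val, Finset.mem_image.2 ⟨p,
      Finset.mem_filter.2 ⟨Finset.mem_univ _, hc, le_of_eq hps⟩, rfl⟩⟩
  set m := P.min' hPne with hm
  have hmP : m ∈ P := P.min'_mem hPne
  set Q := insert (m - 1) (P ∪ P.image (· + 1)) with hQ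
  have hdisj : Disjoint P (P.image (· + 1)) := by
    rw [Finset.disjoint_right]
    rintro x hx hxP
    obtain ⟨q, hq, rfl⟩ := Finset.mem_image.1 hx
    have h1 := (hPprop q hq).2.2.2.1
    have h2 := (hPprop _ hxP).2.2.1
    rw [Nat.add_sub_cancel] at h2
    omega
  have hnotmem : m - 1 ∉ P ∪ P.image (· + 1) := by
    intro hmem
    have hm1 : 0 < m := (hPprop m hmP).1
    rcases Finset.mem_union.1 hmem with h' | h'
    · have := P.min'_le _ h'; omega
    · obtain ⟨q, hq, hq1⟩ := Finset.mem_image.1 h'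
      have := P.min'_le _ hq
      have h0q : 0 < q := (hPprop q hq).1
      omega
  have hQcard : Q.card = 2 * k + 1 := by
    rw [hQ, Finset.card_insert_of_notMem hnotmem, Finset.card_union_of_disjoint hdisj,
      Finset.card_image_of_injective _ (add_left_injective 1), hPcard]
    ring
  have hQsub : Q ⊆ VN π s := by
    intro p hp
    simp only [hQ, Finset.mem_insert, Finset.mem_union] at hp
    simp only [VN, Finset.mem_filter, Finset.mem_range]
    rcases hp with rfl | hp | hp
    · obtain ⟨h0, h1, hl, _, hle⟩ := hPprop m hmP
      exact ⟨by omega, le_trans hl.le hle⟩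
    · obtain ⟨h0, h1, _, _, hle⟩ := hPprop p hp
      exact ⟨by omega, hle⟩
    · obtain ⟨q, hq, rfl⟩ := Finset.mem_image.1 hp
      obtain ⟨h0, h1, _, hr, hle⟩ := hPprop q hq
      exact ⟨h1, le_trans hr.le hle⟩
  have hfin := Finset.card_le_card hQsub
  rw [hQcard, VN_card π hsn] at hfin
  omega

lemma count_lemma (S : Finset ℕ) (n : ℕ) (hn : ∀ t ∈ S, 3 ≤ t ∧ t ≤ n) {j : ℕ}
    (hj : j < (S.sort (· ≤ ·)).length) :
    ((Finset.range n).filter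
        (fun v => v + 1 ∉ S ∧ v + 1 < (S.sort (· ≤ ·)).getD j 0)).card
      = (S.sort (· ≤ ·)).getD j 0 - 1 - j := by
  set bj := (S.sort (· ≤ ·)).getD j 0 with hbj
  have hbjS : bj ∈ S := sortGetD_mem S hj
  obtain ⟨h3, hbn⟩ := hn _ hbjS
  have heq : (Finset.range n).filter (fun v => v + 1 ∉ S ∧ v + 1 < bj)
      = (Finset.range (bj - 1)).filter (fun v => v + 1 ∉ S) := by
    ext v
    simp only [Finset.mem_filter, Finset.mem_range]
    constructor
    · rintro ⟨h1, h2, h4⟩; exact ⟨by omega, h2⟩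
    · rintro ⟨h1, h2⟩; exact ⟨by omega, h2, by omega⟩
  have himg : ((Finset.range (bj - 1)).filter (fun v => v + 1 ∈ S)).image (· + 1)
      = S.filter (· < bj) := by
    ext t
    simp only [Finset.mem_image, Finset.mem_filter, Finset.mem_range]
    constructor
    · rintro ⟨v, ⟨hv, hvS⟩, rfl⟩; exact ⟨hvS, by omega⟩
    · rintro ⟨htS, hlt⟩
      have := (hn t htS).1
      exact ⟨t - 1, ⟨by omega, by rw [show t - 1 + 1 = t by omega]; exact htS⟩, by omega⟩
  have hcard1 : ((Finset.range (bj - 1)).filter (fun v => v + 1 ∈ S)).card = j := by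
    rw [← filter_lt_sortGetD_card S hj, ← hbj, ← himg,
      Finset.card_image_of_injective _ (add_left_injective 1)]
  have hsplit := Finset.card_filter_add_card_filter_not
    (s := Finset.range (bj - 1)) (p := fun v => v + 1 ∈ S)
  rw [Finset.card_range] at hsplit
  rw [heq]
  have : (Finset.filter (fun a => ¬(a + 1 ∈ S)) (Finset.range (bj - 1))).card
      = (Finset.filter (fun v => v + 1 ∉ S) (Finset.range (bj - 1))).card := rfl
  omega

lemma backward_dir (S : Finset ℕ) (hne : S.Nonempty)
    (hS : ∀ i (h : i < (S.sort (· ≤ ·)).length), 2 * (i + 1) < (S.sort (· ≤ ·)).get ⟨i, h⟩) :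
    ∃ (n : ℕ) (π : Equiv.Perm (Fin n)), pinSet n π = S := by
  classical
  set d := S.card with hd
  have hLlen : (S.sort (· ≤ ·)).length = d := S.length_sort _
  have hd1 : 1 ≤ d := Finset.card_pos.2 hne
  set b : ℕ → ℕ := fun j => (S.sort (· ≤ ·)).getD j 0 with hb
  have hbeq : ∀ j, b j = (S.sort (· ≤ ·)).getD j 0 := fun _ => rfl
  have hS' : ∀ j, j < d → 2 * (j + 1) < b j := by
    intro j hj
    have hj' : j < (S.sort (· ≤ ·)).length := by omega
    have := hS j hj'
    rw [List.get_eq_getElem, ← List.getD_eq_getElem _ 0 hj'] at this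
    rw [hbeq]
    exact this
  have hbmem : ∀ j, j < d → b j ∈ S := fun j hj => sortGetD_mem S (by omega)
  have hmemS : ∀ t ∈ S, 3 ≤ t := by
    intro t ht
    obtain ⟨j, hj, rfl⟩ := (mem_iff_sortGetD S t).1 ht
    have hj' : j < d := by omega
    have h1 := hS' j hj'
    have h2 := hbeq j
    omega
  set n := S.max' hne with hn
  have hnS : n ∈ S := S.max'_mem hne
  have hle_n : ∀ t ∈ S, t ≤ n := fun t ht => S.le_max' t ht
  have hbmono : ∀ i j, i < j → j < d → b i < b j := fun i j hij hj =>
    sortGetD_strictMono S hij (by omega)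
  have hnd : 2 * d < n := by
    have h1 := hS' (d - 1) (by omega)
    have h2 := hle_n _ (hbmem (d - 1) (by omega))
    omega
  set A := (Finset.range n).filter (fun v => v + 1 ∉ S) with hA
  set a : ℕ → ℕ := fun j => (A.sort (· ≤ ·)).getD j 0 with ha
  have haeq : ∀ j, a j = (A.sort (· ≤ ·)).getD j 0 := fun _ => rfl
  have hAcard : A.card = n - d := by
    have himg : ((Finset.range n).filter (fun v => v + 1 ∈ S)).image (· + 1) = S := by
      ext t
      simp only [Finset.mem_image, Finset.mem_filter, Finset.mem_range]
      constructor
      · rintro ⟨v, ⟨hv, hvS⟩, rfl⟩; exact hvS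
      · intro ht
        have h3 := hmemS t ht
        have h4 := hle_n t ht
        exact ⟨t - 1, ⟨by omega, by rw [show t - 1 + 1 = t by omega]; exact ht⟩, by omega⟩
    have hc : ((Finset.range n).filter (fun v => v + 1 ∈ S)).card = d := by
      rw [hd]
      conv_rhs => rw [← himg]
      rw [Finset.card_image_of_injective _ (add_left_injective 1)]
    have hsplit := Finset.card_filter_add_card_filter_not
      (s := Finset.range n) (p := fun v => v + 1 ∈ S)
    rw [Finset.card_range] at hsplit
    have hAc : (Finset.filter (fun v => ¬(v + 1 ∈ S)) (Finset.range n)).card = A.card := rfl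
    omega
  have hMlen : (A.sort (· ≤ ·)).length = n - d := by rw [Finset.length_sort, hAcard]
  have haprop : ∀ j, j < n - d → a j < n ∧ a j + 1 ∉ S := by
    intro j hj
    have h := sortGetD_mem A (show j < (A.sort (· ≤ ·)).length by omega)
    rw [hA, Finset.mem_filter, Finset.mem_range] at h
    rw [haeq]
    exact h
  have hamono : ∀ i j, i < j → j < n - d → a i < a j := by
    intro i j hij hj
    rw [haeq, haeq]
    exact sortGetD_strictMono A (hij := hij) (by omega)
  have ha_inj : ∀ i j, i < n - d → j < n - d → a i = a j → i = j := by
    intro i j hi hj hconeq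
    by_contra hne'
    rcases Ne.lt_or_gt hne' with h' | h'
    · exact absurd hconeq (ne_of_lt (hamono _ _ h' hj))
    · exact absurd hconeq.symm (ne_of_lt (hamono _ _ h' hi))
  have hb_inj : ∀ i j, i < d → j < d → b i = b j → i = j := by
    intro i j hi hj hconeq
    by_contra hne'
    rcases Ne.lt_or_gt hne' with h' | h'
    · exact absurd hconeq (ne_of_lt (hbmono _ _ h' hj))
    · exact absurd hconeq.symm (ne_of_lt (hbmono _ _ h' hi))
  -- key inequality
  have hkey : ∀ j, j < d → ∀ i, i ≤ j + 1 → a i + 1 < b j := by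
    intro j hj
    have hcnt := count_lemma S n (fun t ht => ⟨hmemS t ht, hle_n t ht⟩)
      (show j < (S.sort (· ≤ ·)).length by omega)
    have hcnt' : ((Finset.range n).filter (fun v => v + 1 ∉ S ∧ v + 1 < b j)).card
        = b j - 1 - j := hcnt
    have hge : j + 2 ≤ b j - 1 - j := by have := hS' j hj; omega
    have hj1 : j + 1 < n - d := by omega
    have hmain : a (j + 1) + 1 < b j := by
      by_contra hcon
      push_neg at hcon
      have hsub : (Finset.range n).filter (fun v => v + 1 ∉ S ∧ v + 1 < b j)
          ⊆ (Finset.range (j + 1)).image a := by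
        intro v hv
        simp only [Finset.mem_filter, Finset.mem_range] at hv
        obtain ⟨hvn, hvS, hvb⟩ := hv
        have hvA : v ∈ A := by rw [hA, Finset.mem_filter, Finset.mem_range]; exact ⟨hvn, hvS⟩
        obtain ⟨m, hm, rfl⟩ := (mem_iff_sortGetD A v).1 hvA
        have hmlen : m < n - d := by omega
        have hvb' : a m + 1 < b j := by rw [haeq]; exact hvb
        have hmj : m < j + 1 := by
          by_contra hcon2
          push_neg at hcon2
          have hle' : a (j + 1) ≤ a m := by
            rcases Nat.lt_or_ge (j + 1) m with h' | h'
            · exact (hamono _ _ h' hmlen).le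
            · have : m = j + 1 := by omega
              rw [this]
          omega
        exact Finset.mem_image.2 ⟨m, Finset.mem_range.2 hmj, (haeq m).symm⟩
      have hcard := Finset.card_le_card hsub
      have himle := Finset.card_image_le (s := Finset.range (j + 1)) (f := a)
      rw [Finset.card_range] at himle
      rw [hcnt'] at hcard
      omega
    intro i hi
    rcases Nat.lt_or_ge i (j + 1) with h' | h'
    · have := hamono i (j + 1) h' hj1; omega
    · have : i = j + 1 := by omega
      rw [this]; exact hmain
  have ha_top : ∀ j, j < n - d → a j + 1 < n := by
    intro j hj
    obtain ⟨h1, h2⟩ := haprop j hj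
    rcases Nat.lt_or_ge (a j + 1) n with h' | h'
    · exact h'
    · exfalso
      have : a j + 1 = n := by omega
      rw [this] at h2
      exact h2 hnS
  have hbtop : b (d - 1) = n := by
    obtain ⟨j, hj, hjn⟩ := (mem_iff_sortGetD S n).1 hnS
    have hjd : j < d := by omega
    have hjn' : b j = n := by rw [hbeq]; exact hjn
    have hble : b j ≤ b (d - 1) := by
      rcases Nat.lt_or_ge j (d - 1) with h' | h'
      · exact (hbmono _ _ h' (by omega)).le
      · have : j = d - 1 := by omega
        rw [this]
    have := hle_n _ (hbmem (d - 1) (by omega))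
    omega
  -- the one-line word
  set fval : ℕ → ℕ := fun p =>
    if p < 2 * d then (if p % 2 = 1 then b (p / 2) - 1 else a (p / 2))
    else a (n - 1 - (p - d)) with hfval
  have hfval_odd : ∀ p, p % 2 = 1 → p < 2 * d → fval p = b (p / 2) - 1 := by
    intro p h1 h2
    show (if p < 2 * d then (if p % 2 = 1 then b (p / 2) - 1 else a (p / 2))
      else a (n - 1 - (p - d))) = b (p / 2) - 1
    rw [if_pos h2, if_pos h1]
  have hfval_even : ∀ p, p % 2 = 0 → p < 2 * d → fval p = a (p / 2) := by
    intro p h1 h2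
    show (if p < 2 * d then (if p % 2 = 1 then b (p / 2) - 1 else a (p / 2))
      else a (n - 1 - (p - d))) = a (p / 2)
    rw [if_pos h2, if_neg (by omega)]
  have hfval_tail : ∀ p, 2 * d ≤ p → fval p = a (n - 1 - (p - d)) := by
    intro p h1
    show (if p < 2 * d then (if p % 2 = 1 then b (p / 2) - 1 else a (p / 2))
      else a (n - 1 - (p - d))) = a (n - 1 - (p - d))
    rw [if_neg (by omega)]
  have htail_idx : ∀ p, 2 * d ≤ p → p < n → d ≤ n - 1 - (p - d) ∧ n - 1 - (p - d) < n - d := by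
    intro p h1 h2; omega
  have hfval_lt : ∀ p, p < n → fval p < n := by
    intro p hp
    rcases Nat.lt_or_ge p (2 * d) with h' | h'
    · rcases Nat.mod_two_eq_zero_or_one p with h1 | h1
      · rw [hfval_even p h1 h']
        exact (haprop (p / 2) (by omega)).1
      · rw [hfval_odd p h1 h']
        have h3 := hmemS _ (hbmem (p / 2) (by omega))
        have h4 := hle_n _ (hbmem (p / 2) (by omega))
        omega
    · rw [hfval_tail p h']
      exact (haprop _ (htail_idx p h' hp).2).1
  have ha_ne_b : ∀ i j, i < n - d → j < d → a i ≠ b j - 1 := by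
    intro i j hi hj hcon
    have h2 := (haprop i hi).2
    have h3 := hmemS _ (hbmem j hj)
    have heq1 : a i + 1 = b j := by omega
    rw [heq1] at h2
    exact h2 (hbmem j hj)
  have hfval_inj : ∀ p q, p < n → q < n → fval p = fval q → p = q := by
    intro p q hp hq heq
    rcases Nat.lt_or_ge p (2 * d) with hp' | hp' <;> rcases Nat.lt_or_ge q (2 * d) with hq' | hq'
    · rcases Nat.mod_two_eq_zero_or_one p with h1 | h1 <;>
        rcases Nat.mod_two_eq_zero_or_one q with h2 | h2
      · rw [hfval_even p h1 hp', hfval_even q h2 hq'] at heq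
        have := ha_inj _ _ (by omega) (by omega) heq; omega
      · rw [hfval_even p h1 hp', hfval_odd q h2 hq'] at heq
        exact absurd heq (ha_ne_b _ _ (by omega) (by omega))
      · rw [hfval_odd p h1 hp', hfval_even q h2 hq'] at heq
        exact absurd heq.symm (ha_ne_b _ _ (by omega) (by omega))
      · rw [hfval_odd p h1 hp', hfval_odd q h2 hq'] at heq
        have h3 := hmemS _ (hbmem (p / 2) (by omega))
        have h4 := hmemS _ (hbmem (q / 2) (by omega))
        have hbb : b (p / 2) = b (q / 2) := by omega
        have := hb_inj _ _ (by omega) (by omega) hbb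
        omega
    · have hiq := htail_idx q hq' hq
      rw [hfval_tail q hq'] at heq
      rcases Nat.mod_two_eq_zero_or_one p with h1 | h1
      · rw [hfval_even p h1 hp'] at heq
        have := ha_inj _ _ (by omega) (by omega) heq
        omega
      · rw [hfval_odd p h1 hp'] at heq
        exact absurd heq.symm (ha_ne_b _ _ (by omega) (by omega))
    · have hip := htail_idx p hp' hp
      rw [hfval_tail p hp'] at heq
      rcases Nat.mod_two_eq_zero_or_one q with h1 | h1
      · rw [hfval_even q h1 hq'] at heq
        have := ha_inj _ _ (by omega) (by omega) heq
        omega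
      · rw [hfval_odd q h1 hq'] at heq
        exact absurd heq (ha_ne_b _ _ (by omega) (by omega))
    · rw [hfval_tail p hp', hfval_tail q hq'] at heq
      have := ha_inj _ _ (htail_idx p hp' hp).2 (htail_idx q hq' hq).2 heq
      omega
  have hbij : Function.Bijective (fun p : Fin n => (⟨fval p.val, hfval_lt p.val p.isLt⟩ : Fin n)) := by
    rw [← Finite.injective_iff_bijective]
    intro p q hpq
    have hv := congrArg Fin.val hpq
    exact Fin.val_injective (hfval_inj _ _ p.isLt q.isLt hv)
  refine ⟨n, Equiv.ofBijective _ hbij, ?_⟩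
  ext t
  simp only [pinSet, Finset.mem_image, Finset.mem_filter, Finset.mem_univ, true_and,
    Equiv.ofBijective_apply]
  constructor
  · rintro ⟨p, ⟨h0, h1, hlft, hrgt⟩, hpt⟩
    have hpt' : fval p.val + 1 = t := hpt
    have hpn : p.val < n := p.isLt
    have hl : fval (p.val - 1) < fval p.val :=
      hlft ⟨p.val - 1, by omega⟩ (by show p.val - 1 + 1 = p.val; omega)
    have hr : fval (p.val + 1) < fval p.val := hrgt ⟨p.val + 1, h1⟩ rfl
    have hodd : p.val % 2 = 1 ∧ p.val < 2 * d := by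
      rcases Nat.lt_or_ge p.val (2 * d) with h' | h'
      · rcases Nat.mod_two_eq_zero_or_one p.val with h1' | h1'
        · exfalso
          rw [hfval_even _ h1' h'] at hr
          have hp1 : (p.val + 1) % 2 = 1 := by omega
          have hp1' : p.val + 1 < 2 * d := by omega
          rw [hfval_odd _ hp1 hp1'] at hr
          have he : (p.val + 1) / 2 = p.val / 2 := by omega
          rw [he] at hr
          have hk1 := hkey (p.val / 2) (by omega) (p.val / 2) (by omega)
          omega
        · exact ⟨h1', h'⟩
      · exfalso
        rcases Nat.eq_or_lt_of_le h' with h2 | h2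
        · rw [hfval_tail _ h'] at hl
          have hodd1 : (p.val - 1) % 2 = 1 := by omega
          rw [hfval_odd _ hodd1 (by omega)] at hl
          have hpd : (p.val - 1) / 2 = d - 1 := by omega
          rw [hpd, hbtop] at hl
          have := ha_top (n - 1 - (p.val - d)) (htail_idx _ h' p.isLt).2
          omega
        · rw [hfval_tail _ h', hfval_tail _ (by omega : 2 * d ≤ p.val - 1)] at hl
          have hidx : n - 1 - (p.val - 1 - d) = (n - 1 - (p.val - d)) + 1 := by omega
          rw [hidx] at hl
          have := hamono (n - 1 - (p.val - d)) (n - 1 - (p.val - d) + 1) (by omega) (by omega)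
          omega
    obtain ⟨h1', h2'⟩ := hodd
    rw [hfval_odd _ h1' h2'] at hpt'
    have h3 := hmemS _ (hbmem (p.val / 2) (by omega))
    have htt : t = b (p.val / 2) := by omega
    rw [htt]
    exact hbmem _ (by omega)
  · intro ht
    obtain ⟨j, hj, hjt⟩ := (mem_iff_sortGetD S t).1 ht
    have hjd : j < d := by omega
    have hjt' : b j = t := by rw [hbeq]; exact hjt
    have hjn : 2 * j + 1 < n := by omega
    refine ⟨⟨2 * j + 1, hjn⟩, ⟨?_, ?_, ?_, ?_⟩, ?_⟩
    · show 0 < 2 * j + 1; omega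
    · show 2 * j + 1 + 1 < n; omega
    · intro q hq
      have hqv : q.val = 2 * j := by
        have h5 : q.val + 1 = 2 * j + 1 := hq
        omega
      show fval q.val < fval (2 * j + 1)
      rw [hqv, hfval_even (2 * j) (by omega) (by omega),
        hfval_odd (2 * j + 1) (by omega) (by omega)]
      have e1 : 2 * j / 2 = j := by omega
      have e2 : (2 * j + 1) / 2 = j := by omega
      rw [e1, e2]
      have hk1 := hkey j hjd j (by omega)
      omega
    · intro q hq
      have hqv : q.val = 2 * j + 2 := hq
      show fval q.val < fval (2 * j + 1)
      rw [hqv, hfval_odd (2 * j + 1) (by omega) (by omega)]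
      have e2 : (2 * j + 1) / 2 = j := by omega
      rw [e2]
      rcases Nat.lt_or_ge (2 * j + 2) (2 * d) with h' | h'
      · rw [hfval_even (2 * j + 2) (by omega) h']
        have e3 : (2 * j + 2) / 2 = j + 1 := by omega
        rw [e3]
        have hk1 := hkey j hjd (j + 1) le_rfl
        omega
      · have hj2 : j = d - 1 := by omega
        rw [hfval_tail (2 * j + 2) h', show b j = n by rw [hj2]; exact hbtop]
        have hidx := htail_idx (2 * j + 2) h' (by omega)
        have := ha_top _ hidx.2
        omega
    · show fval (2 * j + 1) + 1 = t
      rw [hfval_odd (2 * j + 1) (by omega) (by omega)]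
      have e2 : (2 * j + 1) / 2 = j := by omega
      rw [e2]
      have h3 := hmemS _ (hbmem j hjd)
      omega


/-- A set `S = {s_1 < ⋯ < s_d}` is an admissible pinnacle set iff `s_i > 2i` for all `i`. -/
theorem stmt0 (S : Finset ℕ) :
    (∃ (n : ℕ) (π : Equiv.Perm (Fin n)), pinSet n π = S) ↔
      ∀ i (h : i < (S.sort (· ≤ ·)).length), 2 * (i + 1) < (S.sort (· ≤ ·)).get ⟨i, h⟩ := by
  constructor
  · rintro ⟨n, π, hpin⟩
    exact forward_dir S n π hpin
  · intro hS
    rcases S.eq_empty_or_nonempty with rfl | hne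
    · refine ⟨0, 1, ?_⟩
      simp [pinSet]
    · exact backward_dir S hne hS
end

section
/- The number of distinct pinnacle sets of permutations of [n] equals the binomial coefficient C(n-1, ⌊(n-1)/2⌋). -/
namespace PinAux
open Finset

open Finset

noncomputable def sl (T : Finset ℕ) : List ℕ := T.sort (· ≤ ·)

lemma sl_length (T : Finset ℕ) : (sl T).length = T.card := Finset.length_sort _

lemma sl_mem {T : Finset ℕ} {t : ℕ} (ht : t < T.card) : (sl T).getD t 0 ∈ T := by
  rw [List.getD_eq_getElem _ _ (by rw [sl_length]; exact ht)]
  exact (Finset.mem_sort _).mp (List.getElem_mem _)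

lemma sl_strictMono {T : Finset ℕ} {u t : ℕ} (h : u < t) (ht : t < T.card) :
    (sl T).getD u 0 < (sl T).getD t 0 := by
  have hu : u < (sl T).length := by rw [sl_length]; omega
  have ht' : t < (sl T).length := by rw [sl_length]; exact ht
  rw [List.getD_eq_getElem _ _ hu, List.getD_eq_getElem _ _ ht']
  exact T.sortedLT_sort.strictMono_get (a := ⟨u, hu⟩) (b := ⟨t, ht'⟩) h

lemma sl_mono {T : Finset ℕ} {u t : ℕ} (h : u ≤ t) (ht : t < T.card) :
    (sl T).getD u 0 ≤ (sl T).getD t 0 := by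
  rcases eq_or_lt_of_le h with rfl | h
  · exact le_refl _
  · exact (sl_strictMono h ht).le

lemma sl_surj {T : Finset ℕ} {x : ℕ} (hx : x ∈ T) : ∃ j < T.card, (sl T).getD j 0 = x := by
  have : x ∈ sl T := (Finset.mem_sort _).mpr hx
  obtain ⟨j, hj, hx'⟩ := List.mem_iff_getElem.mp this
  exact ⟨j, by rw [sl_length] at hj; exact hj, by rw [List.getD_eq_getElem _ _ hj]; exact hx'⟩

/-- If `T` has more than `t` elements `< x`, then the `t`-th smallest is `< x`. -/
lemma sl_lt_of_lt_card_filter {T : Finset ℕ} {t x : ℕ}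
    (h : t < (T.filter (· < x)).card) : (sl T).getD t 0 < x := by
  by_contra hge
  push_neg at hge
  have ht : t < T.card := lt_of_lt_of_le h (Finset.card_le_card (Finset.filter_subset _ _))
  -- every element of the filter appears at an index < t
  have : (T.filter (· < x)).card ≤ t := by
    have hsub : T.filter (· < x) ⊆ (Finset.range t).image (fun u => (sl T).getD u 0) := by
      intro y hy
      rw [Finset.mem_filter] at hy
      obtain ⟨j, hj, rfl⟩ := sl_surj hy.1
      have hjt : j < t := by
        by_contra hjt
        push_neg at hjt
        exact absurd hy.2 (not_lt.mpr (le_trans hge (sl_mono hjt hj)))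
      exact Finset.mem_image.mpr ⟨j, Finset.mem_range.mpr hjt, rfl⟩
    calc (T.filter (· < x)).card ≤ _ := Finset.card_le_card hsub
      _ ≤ t := le_trans (Finset.card_image_le) (by simp)
  omega

lemma card_filter_lt_sl {T : Finset ℕ} {j : ℕ} (hj : j < T.card) :
    (T.filter (· < (sl T).getD j 0)).card = j := by
  have h1 : T.filter (· < (sl T).getD j 0) = (Finset.range j).image (fun u => (sl T).getD u 0) := by
    apply Finset.Subset.antisymm
    · intro y hy
      rw [Finset.mem_filter] at hy
      obtain ⟨u, hu, rfl⟩ := sl_surj hy.1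
      have : u < j := by
        by_contra h
        push_neg at h
        exact absurd hy.2 (not_lt.mpr (sl_mono h hu))
      exact Finset.mem_image.mpr ⟨u, Finset.mem_range.mpr this, rfl⟩
    · intro y hy
      obtain ⟨u, hu, rfl⟩ := Finset.mem_image.mp hy
      rw [Finset.mem_range] at hu
      exact Finset.mem_filter.mpr ⟨sl_mem (lt_trans hu hj), sl_strictMono hu hj⟩
  rw [h1, Finset.card_image_of_injOn, Finset.card_range]
  intro a ha b hb hab
  rw [Finset.mem_coe, Finset.mem_range] at ha hb
  by_contra hne
  rcases Nat.lt_or_ge a b with h | h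
  · exact absurd hab (ne_of_lt (sl_strictMono h (lt_trans hb hj)))
  · have : b < a := by omega
    exact absurd hab.symm (ne_of_lt (sl_strictMono this (lt_trans ha hj)))

lemma card_filter_le_sl {T : Finset ℕ} {j : ℕ} (hj : j < T.card) :
    (T.filter (· ≤ (sl T).getD j 0)).card = j + 1 := by
  have key : T.filter (· ≤ (sl T).getD j 0) =
      insert ((sl T).getD j 0) (T.filter (· < (sl T).getD j 0)) := by
    ext y
    simp only [Finset.mem_filter, Finset.mem_insert]
    constructor
    · rintro ⟨hy, hle⟩
      rcases eq_or_lt_of_le hle with h | h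
      · exact Or.inl h
      · exact Or.inr ⟨hy, h⟩
    · rintro (rfl | ⟨hy, h⟩)
      · exact ⟨sl_mem hj, le_refl _⟩
      · exact ⟨hy, h.le⟩
  rw [key, Finset.card_insert_of_notMem (by simp), card_filter_lt_sl hj]


open Finset

def Adm (n : ℕ) : Finset (Finset ℕ) :=
  (Finset.Icc 1 n).powerset.filter fun S => ∀ s ∈ S, 2 * (S.filter (· ≤ s)).card < s

lemma mem_Adm {n : ℕ} {S : Finset ℕ} :
    S ∈ Adm n ↔ S ⊆ Finset.Icc 1 n ∧ ∀ s ∈ S, 2 * (S.filter (· ≤ s)).card < s := by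
  simp [Adm, Finset.mem_filter, Finset.mem_powerset]

lemma empty_mem_Adm (n : ℕ) : (∅ : Finset ℕ) ∈ Adm n := by
  rw [mem_Adm]; exact ⟨Finset.empty_subset _, by simp⟩

lemma two_mul_card_lt {n : ℕ} {S : Finset ℕ} (hS : S ∈ Adm n) (hne : S.Nonempty) :
    2 * S.card < n := by
  rw [mem_Adm] at hS
  have hmax := hS.2 (S.max' hne) (S.max'_mem hne)
  have : S.filter (· ≤ S.max' hne) = S := by
    apply Finset.filter_true_of_mem
    intro x hx; exact S.le_max' x hx
  rw [this] at hmax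
  have : S.max' hne ≤ n := (Finset.mem_Icc.mp (hS.1 (S.max'_mem hne))).2
  omega

lemma card_le_Adm {n : ℕ} {S : Finset ℕ} (hS : S ∈ Adm n) : 2 * S.card ≤ n - 1 := by
  rcases S.eq_empty_or_nonempty with rfl | hne
  · simp
  · have := two_mul_card_lt hS hne; omega

def cnt (n K : ℕ) : ℕ := ((Adm n).filter fun S => S.card ≤ K).card

lemma cnt_zero (n : ℕ) : cnt n 0 = 1 := by
  have : (Adm n).filter (fun S => S.card ≤ 0) = {∅} := by
    ext S
    simp only [Finset.mem_filter, Finset.mem_singleton, Nat.le_zero, Finset.card_eq_zero]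
    constructor
    · rintro ⟨_, h⟩; exact h
    · rintro rfl; exact ⟨empty_mem_Adm n, rfl⟩
  rw [cnt, this]; simp

lemma cnt_stable {n K : ℕ} (h : n ≤ 2 * K) (hK : 1 ≤ K) : cnt n K = cnt n (K - 1) := by
  unfold cnt
  congr 1
  apply Finset.filter_congr
  intro S hS
  constructor
  · intro _
    rcases S.eq_empty_or_nonempty with rfl | hne
    · simp
    · have := two_mul_card_lt hS hne; omega
  · intro h'; omega

lemma cnt_succ {n K : ℕ} (hK : 1 ≤ K) (h2 : 2 * K ≤ n) :
    cnt (n + 1) K = cnt n K + cnt n (K - 1) := by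
  classical
  have hsplit : (Adm (n+1)).filter (fun S => S.card ≤ K) =
      ((Adm (n+1)).filter (fun S => S.card ≤ K ∧ (n+1) ∉ S)) ∪
      ((Adm (n+1)).filter (fun S => S.card ≤ K ∧ (n+1) ∈ S)) := by
    ext S
    simp only [Finset.mem_union, Finset.mem_filter]
    tauto
  have hdisj : Disjoint ((Adm (n+1)).filter (fun S => S.card ≤ K ∧ (n+1) ∉ S))
      ((Adm (n+1)).filter (fun S => S.card ≤ K ∧ (n+1) ∈ S)) := by
    rw [Finset.disjoint_left]
    intro S h1 h2
    simp only [Finset.mem_filter] at h1 h2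
    exact h1.2.2 h2.2.2
  rw [cnt, hsplit, Finset.card_union_of_disjoint hdisj]
  congr 1
  · -- S not containing n+1 : equals Adm n, card ≤ K
    congr 1
    ext S
    simp only [Finset.mem_filter, mem_Adm]
    constructor
    · rintro ⟨⟨hsub, hcond⟩, hcard, hnot⟩
      refine ⟨⟨?_, hcond⟩, hcard⟩
      intro x hx
      have := hsub hx
      rw [Finset.mem_Icc] at this ⊢
      refine ⟨this.1, ?_⟩
      rcases Nat.lt_or_ge x (n+1) with h | h
      · omega
      · exfalso; apply hnot; have : x = n + 1 := by omega
        rwa [this] at hx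
    · rintro ⟨⟨hsub, hcond⟩, hcard⟩
      have hnot : (n+1) ∉ S := by
        intro h
        have := (Finset.mem_Icc.mp (hsub h)).2
        omega
      refine ⟨⟨fun x hx => ?_, hcond⟩, hcard, hnot⟩
      have := Finset.mem_Icc.mp (hsub hx)
      rw [Finset.mem_Icc]
      omega
  · -- S containing n+1 : biject with Adm n, card ≤ K - 1 via erase
    rw [cnt]
    apply Finset.card_bij (fun S _ => S.erase (n+1))
    · -- maps into
      intro S hS
      simp only [Finset.mem_filter, mem_Adm] at hS ⊢
      obtain ⟨⟨hsub, hcond⟩, hcard, hmem⟩ := hS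
      refine ⟨⟨fun x hx => ?_, fun s hs => ?_⟩, ?_⟩
      · have hx' := Finset.mem_of_mem_erase hx
        have hne := Finset.ne_of_mem_erase hx
        have := Finset.mem_Icc.mp (hsub hx')
        rw [Finset.mem_Icc]; omega
      · have hs' := Finset.mem_of_mem_erase hs
        have hsle : s ≤ n := by
          have hne := Finset.ne_of_mem_erase hs
          have := (Finset.mem_Icc.mp (hsub hs')).2
          omega
        have : (S.erase (n+1)).filter (· ≤ s) = S.filter (· ≤ s) := by
          ext y
          simp only [Finset.mem_filter, Finset.mem_erase]
          constructor
          · rintro ⟨⟨_, hy⟩, hle⟩; exact ⟨hy, hle⟩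
          · rintro ⟨hy, hle⟩; exact ⟨⟨by omega, hy⟩, hle⟩
        rw [this]
        exact hcond s hs'
      · rw [Finset.card_erase_of_mem hmem]; omega
    · -- injective
      intro S1 h1 S2 h2 heq
      simp only [Finset.mem_filter] at h1 h2
      have e1 : insert (n+1) (S1.erase (n+1)) = S1 := Finset.insert_erase h1.2.2
      have e2 : insert (n+1) (S2.erase (n+1)) = S2 := Finset.insert_erase h2.2.2
      rw [← e1, ← e2, heq]
    · -- surjective
      intro T hT
      simp only [Finset.mem_filter, mem_Adm] at hT
      obtain ⟨⟨hsub, hcond⟩, hcard⟩ := hT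
      have hnot : (n+1) ∉ T := by
        intro h; have := (Finset.mem_Icc.mp (hsub h)).2; omega
      refine ⟨insert (n+1) T, ?_, by rw [Finset.erase_insert hnot]⟩
      simp only [Finset.mem_filter, mem_Adm]
      have hcardi : (insert (n+1) T).card = T.card + 1 := Finset.card_insert_of_notMem hnot
      refine ⟨⟨?_, ?_⟩, by omega, Finset.mem_insert_self _ _⟩
      · intro x hx
        rcases Finset.mem_insert.mp hx with rfl | hx
        · rw [Finset.mem_Icc]; omega
        · have := Finset.mem_Icc.mp (hsub hx); rw [Finset.mem_Icc]; omega
      · intro s hs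
        rcases Finset.mem_insert.mp hs with rfl | hs
        · have : (insert (n+1) T).filter (· ≤ n+1) = insert (n+1) T := by
            apply Finset.filter_true_of_mem
            intro x hx
            rcases Finset.mem_insert.mp hx with rfl | hx
            · exact le_refl _
            · have := (Finset.mem_Icc.mp (hsub hx)).2; omega
          rw [this, hcardi]
          omega
        · have hsn : s ≤ n := (Finset.mem_Icc.mp (hsub hs)).2
          have : (insert (n+1) T).filter (· ≤ s) = T.filter (· ≤ s) := by
            ext y
            simp only [Finset.mem_filter, Finset.mem_insert]
            constructor
            · rintro ⟨rfl | hy, hle⟩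
              · omega
              · exact ⟨hy, hle⟩
            · rintro ⟨hy, hle⟩; exact ⟨Or.inr hy, hle⟩
          rw [this]
          exact hcond s hs

lemma cnt_eq_choose : ∀ n, 1 ≤ n → ∀ K, 2 * K ≤ n - 1 → cnt n K = (n - 1).choose K := by
  intro n
  induction n with
  | zero => omega
  | succ n ih =>
    intro _ K hK
    rcases Nat.eq_zero_or_pos K with rfl | hKpos
    · rw [cnt_zero]; simp
    rcases Nat.eq_zero_or_pos n with rfl | hn
    · omega
    have h2K : 2 * K ≤ n := by omega
    rw [cnt_succ hKpos h2K]
    have hK1 : cnt n (K - 1) = (n-1).choose (K-1) := ih hn (K-1) (by omega)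
    have hKmain : cnt n K = (n-1).choose K := by
      rcases Nat.lt_or_ge (2*K) n with h | h
      · exact ih hn K (by omega)
      · -- 2K = n
        have h2 : 2 * K = n := by omega
        rw [cnt_stable (by omega) hKpos, hK1]
        have hsym : (n-1).choose (K) = (n-1).choose (K-1) := by
          have : (n : ℕ) - 1 - K = K - 1 := by omega
          rw [← Nat.choose_symm (by omega : K ≤ n - 1), this]
        rw [hsym]
    rw [hKmain, hK1]
    obtain ⟨m, rfl⟩ : ∃ m, n = m + 1 := ⟨n - 1, by omega⟩
    obtain ⟨j, rfl⟩ : ∃ j, K = j + 1 := ⟨K - 1, by omega⟩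
    simp only [Nat.add_sub_cancel, Nat.succ_sub_one]
    rw [Nat.choose_succ_succ]
    simp only [Nat.succ_eq_add_one]
    omega

lemma card_Adm (n : ℕ) (hn : 1 ≤ n) : (Adm n).card = (n-1).choose ((n-1)/2) := by
  have h1 : (Adm n).filter (fun S => S.card ≤ (n-1)/2) = Adm n := by
    apply Finset.filter_true_of_mem
    intro S hS
    have := card_le_Adm hS
    omega
  have := cnt_eq_choose n hn ((n-1)/2) (by omega)
  rw [cnt, h1] at this
  exact this


open Finset

lemma pinSet_mem_Icc {n : ℕ} (π : Equiv.Perm (Fin n)) {s : ℕ} (hs : s ∈ pinSet n π) :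
    s ∈ Finset.Icc 1 n := by
  rw [pinSet] at hs
  obtain ⟨i, _, rfl⟩ := Finset.mem_image.mp hs
  rw [Finset.mem_Icc]
  exact ⟨by omega, (π i).isLt⟩

lemma pinSet_admissible {n : ℕ} (π : Equiv.Perm (Fin n)) {s : ℕ} (hs : s ∈ pinSet n π) :
    2 * ((pinSet n π).filter (· ≤ s)).card < s := by
  classical
  set Pk : Fin n → Prop := fun i =>
    0 < i.val ∧ i.val + 1 < n ∧
    (∀ j : Fin n, j.val + 1 = i.val → π j < π i) ∧
    (∀ j : Fin n, j.val = i.val + 1 → π j < π i) with hPk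
  rw [pinSet] at hs
  obtain ⟨i₀, hi₀, rfl⟩ := Finset.mem_image.mp hs
  rw [Finset.mem_filter] at hi₀
  have hi₀pk : Pk i₀ := hi₀.2
  set Q : Finset (Fin n) := Finset.univ.filter (fun j => Pk j ∧ π j ≤ π i₀) with hQ
  set P : Finset (Fin n) := Finset.univ.filter (fun j => π j ≤ π i₀) with hP
  -- card P = s
  have hPcard : P.card = (π i₀).val + 1 := by
    rw [hP]
    rw [show (Finset.univ.filter (fun j => π j ≤ π i₀)) = Finset.univ.filter (fun j => j ∈ (Finset.Iic (π i₀)).map π.symm.toEmbedding) from ?_]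
    · rw [Finset.filter_mem_eq_inter, Finset.univ_inter, Finset.card_map, Fin.card_Iic]
    · ext j
      simp only [Finset.mem_filter, Finset.mem_map, Finset.mem_Iic, Finset.mem_univ, true_and,
        Equiv.coe_toEmbedding]
      constructor
      · intro h; exact ⟨π j, h, π.symm_apply_apply j⟩
      · rintro ⟨v, hv, rfl⟩; simpa using hv
  -- pinnacle filter card = Q card
  have hfilt : ((pinSet n π).filter (· ≤ (π i₀).val + 1)).card = Q.card := by
    have him : (pinSet n π).filter (· ≤ (π i₀).val + 1) = Q.image (fun j => (π j).val + 1) := by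
      ext y
      constructor
      · intro hy
        rw [Finset.mem_filter] at hy
        obtain ⟨hy1, hley⟩ := hy
        rw [pinSet, Finset.mem_image] at hy1
        obtain ⟨j, hj, rfl⟩ := hy1
        rw [Finset.mem_filter] at hj
        refine Finset.mem_image.mpr ⟨j, ?_, rfl⟩
        rw [hQ, Finset.mem_filter]
        refine ⟨Finset.mem_univ _, hj.2, ?_⟩
        have : (π j).val ≤ (π i₀).val := by omega
        exact this
      · intro hy
        obtain ⟨j, hj, rfl⟩ := Finset.mem_image.mp hy
        rw [hQ, Finset.mem_filter] at hj
        rw [Finset.mem_filter]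
        constructor
        · rw [pinSet, Finset.mem_image]
          exact ⟨j, Finset.mem_filter.mpr ⟨Finset.mem_univ _, hj.2.1⟩, rfl⟩
        · have : (π j).val ≤ (π i₀).val := hj.2.2
          omega
    rw [him]
    apply Finset.card_image_of_injOn
    intro a _ b _ hab
    simp only at hab
    have : (π a).val = (π b).val := by omega
    exact π.injective (Fin.val_injective this)
  -- Q nonempty, minimum
  have hi₀Q : i₀ ∈ Q := by
    rw [hQ, Finset.mem_filter]
    exact ⟨Finset.mem_univ _, hi₀pk, le_refl _⟩
  have hQne : Q.Nonempty := ⟨i₀, hi₀Q⟩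
  set j₀ := Q.min' hQne with hj₀
  have hj₀Q : j₀ ∈ Q := Q.min'_mem hQne
  have hj₀pk : Pk j₀ := (Finset.mem_filter.mp hj₀Q).2.1
  have hj₀le : π j₀ ≤ π i₀ := (Finset.mem_filter.mp hj₀Q).2.2
  -- the injection
  set g : Fin n → Fin n := fun j => if h : j.val + 1 < n then ⟨j.val + 1, h⟩ else j with hg
  have hgval : ∀ j ∈ Q, (g j).val = j.val + 1 := by
    intro j hj
    have hpk : Pk j := (Finset.mem_filter.mp hj).2.1
    rw [hg]; simp only [dif_pos hpk.2.1]
  set e : Fin n := ⟨j₀.val - 1, by omega⟩ with he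
  have heval : e.val + 1 = j₀.val := by
    rw [he]; have := hj₀pk.1; simp; omega
  have hπe : π e < π j₀ := hj₀pk.2.2.1 e heval
  have hQP : Q ⊆ P := by
    intro j hj
    rw [hQ, Finset.mem_filter] at hj
    rw [hP, Finset.mem_filter]
    exact ⟨Finset.mem_univ _, hj.2.2⟩
  have hsub : insert e (Q.image g) ⊆ P \ Q := by
    intro x hx
    rcases Finset.mem_insert.mp hx with rfl | hx
    · rw [Finset.mem_sdiff]
      constructor
      · rw [hP, Finset.mem_filter]
        exact ⟨Finset.mem_univ _, le_of_lt (lt_of_lt_of_le hπe hj₀le)⟩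
      · intro hxQ
        have hpk : Pk e := (Finset.mem_filter.mp hxQ).2.1
        have := hpk.2.2.2 j₀ heval.symm
        exact absurd hπe (not_lt.mpr this.le)
    · obtain ⟨j, hj, rfl⟩ := Finset.mem_image.mp hx
      have hjpk : Pk j := (Finset.mem_filter.mp hj).2.1
      have hjle : π j ≤ π i₀ := (Finset.mem_filter.mp hj).2.2
      have hπgj : π (g j) < π j := hjpk.2.2.2 (g j) (hgval j hj)
      rw [Finset.mem_sdiff]
      constructor
      · rw [hP, Finset.mem_filter]
        exact ⟨Finset.mem_univ _, le_of_lt (lt_of_lt_of_le hπgj hjle)⟩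
      · intro hgQ
        have hpk : Pk (g j) := (Finset.mem_filter.mp hgQ).2.1
        have := hpk.2.2.1 j (by rw [hgval j hj])
        exact absurd hπgj (not_lt.mpr this.le)
  have hcardins : (insert e (Q.image g)).card = Q.card + 1 := by
    rw [Finset.card_insert_of_notMem, Finset.card_image_of_injOn]
    · intro a ha b hb hab
      have := hgval a ha
      have := hgval b hb
      have : a.val = b.val := by
        have h1 := hgval a ha
        have h2 := hgval b hb
        have : (g a).val = (g b).val := by rw [hab]
        omega
      exact Fin.val_injective this
    · intro hmem
      obtain ⟨j, hj, hje⟩ := Finset.mem_image.mp hmem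
      have h1 := hgval j hj
      have h2 : j₀ ≤ j := Q.min'_le j hj
      have : (g j).val = e.val := by rw [hje]
      have : j₀.val ≤ j.val := h2
      omega
  have hle : Q.card + 1 ≤ (P \ Q).card := by
    rw [← hcardins]
    exact Finset.card_le_card hsub
  have hsd : (P \ Q).card = P.card - Q.card := Finset.card_sdiff_of_subset hQP
  have hQleP : Q.card ≤ P.card := Finset.card_le_card hQP
  rw [hfilt]
  omega

lemma exists_perm {n : ℕ} (hn : 1 ≤ n) {S : Finset ℕ} (hS : S ∈ Adm n) :
    ∃ π : Equiv.Perm (Fin n), pinSet n π = S := by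
  classical
  obtain ⟨hsub, hcond⟩ := mem_Adm.mp hS
  set k := S.card with hk
  have hkn : 2 * k ≤ n - 1 := card_le_Adm hS
  have h2k : 2 * k < n := by omega
  set comp : Finset ℕ := Finset.Icc 1 n \ S with hcomp
  have hcompcard : comp.card = n - k := by
    rw [hcomp, Finset.card_sdiff_of_subset hsub, Nat.card_Icc]
    omega
  -- value helpers
  have hsp_mem : ∀ j < k, (sl S).getD j 0 ∈ S := fun j hj => sl_mem hj
  have hcv_mem : ∀ t < n - k, (sl comp).getD t 0 ∈ comp := by
    intro t ht; exact sl_mem (by omega)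
  have hcv_notS : ∀ t < n - k, (sl comp).getD t 0 ∉ S := by
    intro t ht
    have := hcv_mem t ht
    rw [hcomp, Finset.mem_sdiff] at this
    exact this.2
  have hcv_Icc : ∀ t < n - k, (sl comp).getD t 0 ∈ Finset.Icc 1 n := by
    intro t ht
    have := hcv_mem t ht
    rw [hcomp, Finset.mem_sdiff] at this
    exact this.1
  have hcv_mono : ∀ u t, u < t → t < n - k →
      (sl comp).getD u 0 < (sl comp).getD t 0 := by
    intro u t h ht
    exact sl_strictMono h (by omega)
  -- counting: comp has many small elements
  have hcount : ∀ j < k, j + 2 ≤ (comp.filter (· < (sl S).getD j 0)).card := by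
    intro j hj
    set x := (sl S).getD j 0 with hx
    have hxS : x ∈ S := hsp_mem j hj
    have hxIcc := Finset.mem_Icc.mp (hsub hxS)
    have hadm : 2 * (j + 1) < x := by
      have := hcond x hxS
      rwa [card_filter_le_sl hj] at this
    have hset : comp.filter (· < x) = Finset.Icc 1 (x-1) \ S := by
      ext y
      rw [Finset.mem_filter, hcomp, Finset.mem_sdiff, Finset.mem_sdiff,
        Finset.mem_Icc, Finset.mem_Icc]
      constructor
      · rintro ⟨⟨⟨ha, hb⟩, hc⟩, hd⟩
        exact ⟨⟨ha, by omega⟩, hc⟩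
      · rintro ⟨⟨ha, hb⟩, hc⟩
        refine ⟨⟨⟨ha, by omega⟩, hc⟩, by omega⟩
    have hinter : Finset.Icc 1 (x-1) ∩ S = S.filter (· < x) := by
      ext y
      rw [Finset.mem_inter, Finset.mem_filter, Finset.mem_Icc]
      constructor
      · rintro ⟨⟨h1, h2⟩, h3⟩; exact ⟨h3, by omega⟩
      · rintro ⟨h1, h2⟩
        have := Finset.mem_Icc.mp (hsub h1)
        exact ⟨⟨by omega, by omega⟩, h1⟩
    have hcards := Finset.card_sdiff_add_card_inter (Finset.Icc 1 (x-1)) S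
    rw [hinter, card_filter_lt_sl hj, Nat.card_Icc] at hcards
    rw [hset]
    omega
  have hcv_lt_sp : ∀ j < k, ∀ t ≤ j + 1, (sl comp).getD t 0 < (sl S).getD j 0 := by
    intro j hj t ht
    apply sl_lt_of_lt_card_filter
    have := hcount j hj
    omega
  -- the word
  set L : ℕ → ℕ := fun i =>
    if i < 2*k ∧ i % 2 = 1 then (sl S).getD (i/2) 0
    else (sl comp).getD (if i < 2*k then i/2 else i - k) 0 with hL
  have hL_odd : ∀ i, i < 2*k → i % 2 = 1 → L i = (sl S).getD (i/2) 0 := by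
    intro i h1 h2; rw [hL]; simp only [if_pos (⟨h1, h2⟩ : i < 2*k ∧ i % 2 = 1)]
  have hL_even : ∀ i, ¬(i < 2*k ∧ i % 2 = 1) →
      L i = (sl comp).getD (if i < 2*k then i/2 else i - k) 0 := by
    intro i h; rw [hL]; simp only [if_neg h]
  have hidx : ∀ i, i < n → ¬(i < 2*k ∧ i % 2 = 1) →
      (if i < 2*k then i/2 else i - k) < n - k := by
    intro i hi h
    split <;> omega
  have hrange : ∀ i, i < n → 1 ≤ L i ∧ L i ≤ n := by
    intro i hi
    by_cases h : i < 2*k ∧ i % 2 = 1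
    · rw [hL_odd i h.1 h.2]
      have := Finset.mem_Icc.mp (hsub (hsp_mem (i/2) (by omega)))
      omega
    · rw [hL_even i h]
      have := Finset.mem_Icc.mp (hcv_Icc _ (hidx i hi h))
      omega
  have hLinj : ∀ i < n, ∀ i' < n, L i = L i' → i = i' := by
    intro i hi i' hi' heq
    by_cases h : i < 2*k ∧ i % 2 = 1 <;> by_cases h' : i' < 2*k ∧ i' % 2 = 1
    · rw [hL_odd i h.1 h.2, hL_odd i' h'.1 h'.2] at heq
      have : i / 2 = i' / 2 := by
        by_contra hne
        rcases Nat.lt_or_ge (i/2) (i'/2) with hlt | hge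
        · exact absurd heq (ne_of_lt (sl_strictMono hlt (by omega)))
        · have : i'/2 < i/2 := by omega
          exact absurd heq.symm (ne_of_lt (sl_strictMono this (by omega)))
      omega
    · exfalso
      rw [hL_odd i h.1 h.2, hL_even i' h'] at heq
      exact hcv_notS _ (hidx i' hi' h') (heq ▸ hsp_mem (i/2) (by omega))
    · exfalso
      rw [hL_even i h, hL_odd i' h'.1 h'.2] at heq
      exact hcv_notS _ (hidx i hi h) (heq.symm ▸ hsp_mem (i'/2) (by omega))
    · rw [hL_even i h, hL_even i' h'] at heq
      have hti := hidx i hi h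
      have hti' := hidx i' hi' h'
      have : (if i < 2*k then i/2 else i - k) = (if i' < 2*k then i'/2 else i' - k) := by
        by_contra hne
        rcases Nat.lt_or_ge (if i < 2*k then i/2 else i - k) (if i' < 2*k then i'/2 else i' - k) with hlt | hge
        · exact absurd heq (ne_of_lt (hcv_mono _ _ hlt hti'))
        · have hlt' : (if i' < 2*k then i'/2 else i' - k) < (if i < 2*k then i/2 else i - k) := by omega
          exact absurd heq.symm (ne_of_lt (hcv_mono _ _ hlt' hti))
      revert this
      split <;> split <;> intro hh <;> omega
  -- the permutation
  have hbij : Function.Bijective (fun i : Fin n => (⟨L i.val - 1, by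
      have := hrange i.val i.isLt; omega⟩ : Fin n)) := by
    rw [Fintype.bijective_iff_injective_and_card]
    refine ⟨?_, rfl⟩
    intro a b hab
    have h1 := hrange a.val a.isLt
    have h2 := hrange b.val b.isLt
    have : L a.val - 1 = L b.val - 1 := congrArg Fin.val hab
    exact Fin.val_injective (hLinj a.val a.isLt b.val b.isLt (by omega))
  refine ⟨Equiv.ofBijective _ hbij, ?_⟩
  have hπval : ∀ i : Fin n, ((Equiv.ofBijective _ hbij) i).val = L i.val - 1 := by
    intro i; rfl
  have hπval1 : ∀ i : Fin n, ((Equiv.ofBijective _ hbij) i).val + 1 = L i.val := by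
    intro i; have := hrange i.val i.isLt; rw [hπval]; omega
  have hπlt : ∀ i j : Fin n,
      ((Equiv.ofBijective _ hbij) j < (Equiv.ofBijective _ hbij) i) ↔ L j.val < L i.val := by
    intro i j
    rw [Fin.lt_def, hπval, hπval]
    have := hrange i.val i.isLt
    have := hrange j.val j.isLt
    omega
  ext y
  rw [pinSet, Finset.mem_image]
  constructor
  · rintro ⟨i, hi, rfl⟩
    rw [Finset.mem_filter] at hi
    obtain ⟨-, hpos, hlt, hleft, hright⟩ := hi
    rw [hπval1]
    -- show i is odd and < 2k
    by_cases h : i.val < 2*k ∧ i.val % 2 = 1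
    · rw [hL_odd i.val h.1 h.2]
      exact hsp_mem _ (by omega)
    · exfalso
      -- right neighbor is bigger
      set i1 : Fin n := ⟨i.val + 1, hlt⟩ with hi1
      have hr := (hπlt i i1).mp (hright i1 rfl)
      by_cases h2 : i.val < 2*k
      · -- i even < 2k, right neighbor is pinnacle s_{i/2}
        have heven : i.val % 2 = 0 := by omega
        have h1odd : i1.val % 2 = 1 := by simp [hi1]; omega
        have h1lt : i1.val < 2*k := by
          rcases Nat.lt_or_ge (i.val + 1) (2*k) with hc | hc
          · exact hc
          · exfalso
            -- i+1 = 2k even, but i1 odd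
            have : i.val + 1 = 2*k := by omega
            omega
        rw [hL_even i.val h, if_pos h2, hL_odd i1.val h1lt (by simp [hi1]; omega)] at hr
        have : i1.val / 2 = i.val / 2 := by simp [hi1]; omega
        rw [this] at hr
        have := hcv_lt_sp (i.val/2) (by omega) (i.val/2) (by omega)
        omega
      · -- i ≥ 2k, tail increasing
        have hi1v : i1.val = i.val + 1 := rfl
        have h1 : ¬(i1.val < 2*k ∧ i1.val % 2 = 1) := by omega
        rw [hL_even i.val h, hL_even i1.val h1] at hr
        rw [if_neg h2, if_neg (show ¬ i1.val < 2*k by omega)] at hr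
        have hmono := hcv_mono (i.val - k) (i1.val - k) (by omega) (by omega)
        omega
  · intro hy
    obtain ⟨j, hj, hjy⟩ := sl_surj hy
    refine ⟨⟨2*j+1, by omega⟩, ?_, ?_⟩
    · rw [Finset.mem_filter]
      refine ⟨Finset.mem_univ _, by simp, by simp; omega, ?_, ?_⟩
      · intro j' hj'
        rw [hπlt]
        have hj'v : j'.val = 2*j := by simp at hj'; omega
        rw [hL_even j'.val (by omega), if_pos (by omega)]
        rw [hL_odd (2*j+1) (by omega) (by omega)]
        rw [show (2*j+1)/2 = j by omega, hj'v, show (2*j)/2 = j by omega]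
        exact hcv_lt_sp j hj j (by omega)
      · intro j' hj'
        rw [hπlt]
        have hj'v : j'.val = 2*j+2 := by simpa using hj'
        have hne : ¬(j'.val < 2*k ∧ j'.val % 2 = 1) := by omega
        rw [hL_even j'.val hne, hL_odd (2*j+1) (by omega) (by omega),
          show (2*j+1)/2 = j by omega]
        have hidxeq : (if j'.val < 2*k then j'.val/2 else j'.val - k) = j + 1 := by
          split <;> omega
        rw [hidxeq]
        exact hcv_lt_sp j hj (j+1) (by omega)
    · rw [hπval1, hL_odd (2*j+1) (by omega) (by omega), show (2*j+1)/2 = j by omega]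
      exact hjy


lemma image_eq (n : ℕ) (hn : 1 ≤ n) : (Finset.univ.image (pinSet n)) = Adm n := by
  ext S
  constructor
  · intro hS
    obtain ⟨π, -, rfl⟩ := Finset.mem_image.mp hS
    exact mem_Adm.mpr ⟨fun s hs => pinSet_mem_Icc π hs, fun s hs => pinSet_admissible π hs⟩
  · intro hS
    obtain ⟨π, hπ⟩ := exists_perm hn hS
    exact Finset.mem_image.mpr ⟨π, Finset.mem_univ _, hπ⟩

end PinAux

/-- The number of distinct pinnacle sets of permutations of `[n]` is `C(n-1, ⌊(n-1)/2⌋)`. -/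
theorem stmt1 (n : ℕ) (hn : 1 ≤ n) :
    (Finset.univ.image (pinSet n)).card = Nat.choose (n - 1) ((n - 1) / 2) := by
  rw [PinAux.image_eq n hn, PinAux.card_Adm n hn]
end

section
/- For positive integers m, d with m > 2d, the number of admissible pinnacle sets with maximum m and cardinality d equals ((m−2d+1)/(m−1))·C(m−1, d−1). -/
/-- `S = {s_1 < ⋯ < s_d}` is an admissible pinnacle set: `s_i > 2i` for all `i ∈ [d]`. -/
def Admissible (S : Finset ℕ) : Prop :=
  ∀ i (h : i < (S.sort (· ≤ ·)).length), 2 * (i + 1) < (S.sort (· ≤ ·)).get ⟨i, h⟩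

open Finset

/-- Element-wise reformulation of admissibility. -/
def Good (S : Finset ℕ) : Prop := ∀ s ∈ S, 2 * (S.filter (· ≤ s)).card < s

instance : DecidablePred Good := fun S => by unfold Good; infer_instance

lemma card_filter_le (S : Finset ℕ) {k : ℕ} (h : S.card = k) (i : Fin k) :
    (S.filter (· ≤ S.orderEmbOfFin h i)).card = i + 1 := by
  have key : S.filter (· ≤ S.orderEmbOfFin h i) = (Iic i).map (S.orderEmbOfFin h).toEmbedding := by
    ext x
    simp only [mem_filter, mem_map, mem_Iic, RelEmbedding.coe_toEmbedding]
    constructor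
    · rintro ⟨hx, hle⟩
      have hx' : x ∈ Set.range (S.orderEmbOfFin h) := by
        rw [S.range_orderEmbOfFin h]; exact hx
      obtain ⟨j, rfl⟩ := hx'
      exact ⟨j, (S.orderEmbOfFin h).le_iff_le.mp hle, rfl⟩
    · rintro ⟨j, hj, rfl⟩
      exact ⟨S.orderEmbOfFin_mem h j, (S.orderEmbOfFin h).le_iff_le.mpr hj⟩
  rw [key, card_map, Fin.card_Iic]

lemma admissible_iff (S : Finset ℕ) : Admissible S ↔ Good S := by
  constructor
  · intro hA s hs
    have hs' : s ∈ Set.range (S.orderEmbOfFin rfl) := by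
      rw [S.range_orderEmbOfFin rfl]; exact hs
    obtain ⟨i, rfl⟩ := hs'
    have hi : (i : ℕ) < (S.sort (· ≤ ·)).length := by
      rw [Finset.length_sort]; exact i.2
    have h2 := hA i hi
    rw [card_filter_le S rfl i, Finset.orderEmbOfFin_apply]
    simpa using h2
  · intro hG i hi
    have hi' : i < S.card := by rw [← Finset.length_sort (· ≤ ·)]; exact hi
    have he : S.orderEmbOfFin rfl ⟨i, hi'⟩ = (S.sort (· ≤ ·)).get ⟨i, hi⟩ := by
      rw [Finset.orderEmbOfFin_apply]; simp
    have hmem : (S.sort (· ≤ ·)).get ⟨i, hi⟩ ∈ S := by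
      rw [← Finset.mem_sort (· ≤ ·)]; exact List.get_mem _ _
    have h2 := hG _ hmem
    rw [← he, card_filter_le S rfl ⟨i, hi'⟩] at h2
    rw [Finset.orderEmbOfFin_apply] at h2
    simpa using h2

/-- The finset of admissible-type sets of size `k` inside `[1, n]`. -/
def F (n k : ℕ) : Finset (Finset ℕ) := ((Icc 1 n).powersetCard k).filter Good

lemma mem_F {n k : ℕ} {T : Finset ℕ} :
    T ∈ F n k ↔ T ⊆ Icc 1 n ∧ T.card = k ∧ Good T := by
  simp [F, Finset.mem_powersetCard, and_assoc]

lemma F_zero (n : ℕ) : F n 0 = {∅} := by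
  rw [F, powersetCard_zero, filter_singleton, if_pos]
  intro s hs
  simp at hs

lemma F_eq_empty {n k : ℕ} (hk : 0 < k) (hle : n ≤ 2 * k) : F n k = ∅ := by
  rw [eq_empty_iff_forall_notMem]
  intro T hT
  obtain ⟨hsub, hcard, hgood⟩ := mem_F.mp hT
  have hne : T.Nonempty := card_pos.mp (hcard ▸ hk)
  have hmax := T.max'_mem hne
  have hg := hgood _ hmax
  have hfil : T.filter (· ≤ T.max' hne) = T :=
    filter_true_of_mem (fun x hx => le_max' _ _ hx)
  rw [hfil, hcard] at hg
  have hbound : T.max' hne ≤ n := (mem_Icc.mp (hsub hmax)).2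
  omega

lemma F_succ (n k : ℕ) (h : 2 * (k + 1) < n + 1) :
    (F (n + 1) (k + 1)).card = (F n (k + 1)).card + (F n k).card := by
  have hnotmem : ∀ T ∈ F n k, (n + 1) ∉ T := by
    intro T hT hmem
    have := (mem_Icc.mp ((mem_F.mp hT).1 hmem)).2
    omega
  have hnotmem' : ∀ T ∈ F n (k + 1), (n + 1) ∉ T := by
    intro T hT hmem
    have := (mem_Icc.mp ((mem_F.mp hT).1 hmem)).2
    omega
  have hsplit : F (n + 1) (k + 1) = F n (k + 1) ∪ (F n k).image (insert (n + 1)) := by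
    ext T
    simp only [mem_union, mem_image]
    constructor
    · intro hT
      obtain ⟨hsub, hcard, hgood⟩ := mem_F.mp hT
      by_cases hm : (n + 1) ∈ T
      · right
        refine ⟨T.erase (n + 1), ?_, insert_erase hm⟩
        rw [mem_F]
        refine ⟨?_, ?_, ?_⟩
        · intro x hx
          have hx1 := mem_Icc.mp (hsub (mem_of_mem_erase hx))
          have hx2 := ne_of_mem_erase hx
          rw [mem_Icc]; omega
        · rw [card_erase_of_mem hm, hcard]
          omega

        · intro s hs
          have hsT := mem_of_mem_erase hs
          have hsne := ne_of_mem_erase hs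
          have hsle : s ≤ n := by
            have := (mem_Icc.mp (hsub hsT)).2; omega
          rw [filter_erase, erase_eq_of_notMem]
          · exact hgood s hsT
          · intro hc
            have := (mem_filter.mp hc).2
            simp at this
            omega
      · left
        rw [mem_F]
        refine ⟨?_, hcard, hgood⟩
        intro x hx
        have hx1 := mem_Icc.mp (hsub hx)
        have : x ≠ n + 1 := fun hc => hm (hc ▸ hx)
        rw [mem_Icc]; omega
    · rintro (hT | ⟨T', hT', rfl⟩)
      · obtain ⟨hsub, hcard, hgood⟩ := mem_F.mp hT
        rw [mem_F]
        refine ⟨fun x hx => ?_, hcard, hgood⟩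
        have := mem_Icc.mp (hsub hx)
        rw [mem_Icc]; omega
      · obtain ⟨hsub, hcard, hgood⟩ := mem_F.mp hT'
        have hnm : (n + 1) ∉ T' := hnotmem _ hT'
        rw [mem_F]
        refine ⟨?_, ?_, ?_⟩
        · intro x hx
          rcases mem_insert.mp hx with rfl | hx'
          · rw [mem_Icc]; omega
          · have := mem_Icc.mp (hsub hx')
            rw [mem_Icc]; omega
        · rw [card_insert_of_notMem hnm, hcard]
        · intro s hs
          rcases mem_insert.mp hs with rfl | hs'
          · have hfil : (insert (n + 1) T').filter (· ≤ (n + 1)) = insert (n + 1) T' := by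
              apply filter_true_of_mem
              intro x hx
              rcases mem_insert.mp hx with rfl | hx'
              · simp
              · have := (mem_Icc.mp (hsub hx')).2
                simp; omega
            rw [hfil, card_insert_of_notMem hnm, hcard]
            omega
          · have hsle : s ≤ n := (mem_Icc.mp (hsub hs')).2
            rw [filter_insert, if_neg (by simp; omega)]
            exact hgood s hs'
  have hdisj : Disjoint (F n (k + 1)) ((F n k).image (insert (n + 1))) := by
    rw [disjoint_left]
    intro T hT hT2
    obtain ⟨T', hT', rfl⟩ := mem_image.mp hT2
    exact hnotmem' _ hT (mem_insert_self _ _)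
  have hinj : Set.InjOn (insert (n + 1)) (↑(F n k) : Set (Finset ℕ)) := by
    intro T1 h1 T2 h2 heq
    have e1 : (insert (n + 1) T1).erase (n + 1) = T1 := erase_insert (hnotmem _ h1)
    have e2 : (insert (n + 1) T2).erase (n + 1) = T2 := erase_insert (hnotmem _ h2)
    rw [← e1, ← e2, heq]
  rw [hsplit, card_union_of_disjoint hdisj, card_image_of_injOn hinj]

lemma key_identity (n k : ℕ) : n * (F n k).card = (n - 2 * k) * Nat.choose n k := by
  induction n generalizing k with
  | zero =>
    match k with
    | 0 => simp
    | k + 1 => simp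
  | succ n ih =>
    match k with
    | 0 => simp [F_zero]
    | k + 1 =>
      rcases le_or_gt (n + 1) (2 * (k + 1)) with hle | hlt
      · rw [F_eq_empty (Nat.succ_pos k) hle, Nat.sub_eq_zero_of_le hle]
        simp
      · rw [F_succ n k hlt]
        have hn2 : 2 * (k + 1) ≤ n := by omega
        have hn0 : 0 < n := by omega
        set a := (F n (k + 1)).card with ha
        set b := (F n k).card with hb
        have hA : (n : ℚ) * a = ((n : ℚ) - 2 * (k + 1)) * (n.choose (k + 1)) := by
          have h1 := ih (k + 1)
          have h2 : ((n * a : ℕ) : ℚ) = (((n - 2 * (k + 1)) * n.choose (k + 1) : ℕ) : ℚ) := by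
            exact_mod_cast congrArg (Nat.cast : ℕ → ℚ) h1
          push_cast [Nat.cast_sub hn2] at h2
          convert h2 using 2
        have hB : (n : ℚ) * b = ((n : ℚ) - 2 * k) * (n.choose k) := by
          have h1 := ih k
          have h2 : ((n * b : ℕ) : ℚ) = (((n - 2 * k) * n.choose k : ℕ) : ℚ) := by
            exact_mod_cast congrArg (Nat.cast : ℕ → ℚ) h1
          push_cast [Nat.cast_sub (show 2 * k ≤ n by omega)] at h2
          exact h2
        have hCid : ((n.choose (k + 1) : ℚ)) * (k + 1) = (n.choose k) * ((n : ℚ) - k) := by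
          have h1 := Nat.choose_succ_right_eq n k
          have h2 : ((n.choose (k + 1) * (k + 1) : ℕ) : ℚ) =
              ((n.choose k * (n - k) : ℕ) : ℚ) := by
            exact_mod_cast congrArg (Nat.cast : ℕ → ℚ) h1
          push_cast [Nat.cast_sub (show k ≤ n by omega)] at h2
          exact h2
        apply Nat.eq_of_mul_eq_mul_left hn0
        have hcast : ∀ x y : ℕ, (x : ℚ) = (y : ℚ) → x = y := fun x y hh => by
          exact_mod_cast hh
        apply hcast
        push_cast [Nat.choose_succ_succ, Nat.succ_eq_add_one, Nat.cast_sub (le_of_lt hlt)]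
        linear_combination ((n : ℚ) + 1) * hA + ((n : ℚ) + 1) * hB - 2 * hCid

/-- For `m > 2d ≥ 2`, the number of admissible pinnacle sets with maximum `m` and
cardinality `d` equals `((m−2d+1)/(m−1))·C(m−1, d−1)`. -/
theorem stmt9 (m d : ℕ) (hd : 0 < d) (h : 2 * d < m) :
    (Nat.card {S : Finset ℕ //
        Admissible S ∧ S.card = d ∧ m ∈ S ∧ ∀ s ∈ S, s ≤ m} : ℚ) =
      ((m : ℚ) - 2 * d + 1) / ((m : ℚ) - 1) * Nat.choose (m - 1) (d - 1) := by
  have hm1 : 1 ≤ m := by omega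
  -- The equivalence with F (m-1) (d-1)
  have toF : ∀ S : Finset ℕ, Admissible S ∧ S.card = d ∧ m ∈ S ∧ (∀ s ∈ S, s ≤ m) →
      S.erase m ∈ F (m - 1) (d - 1) := by
    rintro S ⟨hA, hc, hmS, hb⟩
    have hG : Good S := (admissible_iff S).mp hA
    rw [mem_F]
    refine ⟨?_, ?_, ?_⟩
    · intro x hx
      have hxS := mem_of_mem_erase hx
      have hxne := ne_of_mem_erase hx
      have hxle := hb x hxS
      have hxpos : 2 * (S.filter (· ≤ x)).card < x := hG x hxS
      have hxmem : x ∈ S.filter (· ≤ x) := mem_filter.mpr ⟨hxS, by simp⟩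
      have : 1 ≤ (S.filter (· ≤ x)).card := card_pos.mpr ⟨x, hxmem⟩
      rw [mem_Icc]; omega
    · rw [card_erase_of_mem hmS, hc]
    · intro s hs
      have hsS := mem_of_mem_erase hs
      have hsne := ne_of_mem_erase hs
      have hsle : s < m := lt_of_le_of_ne (hb s hsS) hsne
      rw [filter_erase, erase_eq_of_notMem]
      · exact hG s hsS
      · intro hcon
        have := (mem_filter.mp hcon).2
        omega
  have fromF : ∀ T : Finset ℕ, T ∈ F (m - 1) (d - 1) →
      Admissible (insert m T) ∧ (insert m T).card = d ∧ m ∈ insert m T ∧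
        (∀ s ∈ insert m T, s ≤ m) := by
    intro T hT
    obtain ⟨hsub, hcard, hgood⟩ := mem_F.mp hT
    have hnm : m ∉ T := by
      intro hc
      have := (mem_Icc.mp (hsub hc)).2
      omega
    have hGi : Good (insert m T) := by
      intro s hs
      rcases mem_insert.mp hs with hsm | hs'
      · rw [hsm]
        have hfil : (insert m T).filter (· ≤ m) = insert m T := by
          apply filter_true_of_mem
          intro x hx
          rcases mem_insert.mp hx with rfl | hx'
          · simp
          · have := (mem_Icc.mp (hsub hx')).2
            simp; omega
        rw [hfil, card_insert_of_notMem hnm, hcard]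
        omega
      · have hsle : s ≤ m - 1 := (mem_Icc.mp (hsub hs')).2
        rw [filter_insert, if_neg (by simp; omega)]
        exact hgood s hs'
    refine ⟨(admissible_iff _).mpr hGi, ?_, mem_insert_self _ _, ?_⟩
    · rw [card_insert_of_notMem hnm, hcard]; omega
    · intro s hs
      rcases mem_insert.mp hs with rfl | hs'
      · exact le_rfl
      · have := (mem_Icc.mp (hsub hs')).2
        omega
  have e : {S : Finset ℕ // Admissible S ∧ S.card = d ∧ m ∈ S ∧ ∀ s ∈ S, s ≤ m} ≃
      {T : Finset ℕ // T ∈ F (m - 1) (d - 1)} :=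
    { toFun := fun S => ⟨S.1.erase m, toF S.1 S.2⟩
      invFun := fun T => ⟨insert m T.1, fromF T.1 T.2⟩
      left_inv := fun S => Subtype.ext (insert_erase S.2.2.2.1)
      right_inv := fun T => Subtype.ext (erase_insert (by
        intro hc
        have := (mem_Icc.mp ((mem_F.mp T.2).1 hc)).2
        omega)) }
  rw [Nat.card_congr e, Nat.card_eq_finsetCard]
  have hkey := key_identity (m - 1) (d - 1)
  have h1 : m - 1 - 2 * (d - 1) = m - 2 * d + 1 := by omega
  rw [h1] at hkey
  have hc : ((m : ℚ) - 1) * ((F (m - 1) (d - 1)).card) =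
      ((m : ℚ) - 2 * d + 1) * ((m - 1).choose (d - 1)) := by
    have h2 : (((m - 1) * (F (m - 1) (d - 1)).card : ℕ) : ℚ) =
        (((m - 2 * d + 1) * Nat.choose (m - 1) (d - 1) : ℕ) : ℚ) := by
      exact_mod_cast congrArg (Nat.cast : ℕ → ℚ) hkey
    push_cast [Nat.cast_sub hm1, Nat.cast_sub (show 2 * d ≤ m by omega)] at h2
    exact h2
  have hne : (m : ℚ) - 1 ≠ 0 := by
    have : (2 : ℚ) ≤ (m : ℚ) := by exact_mod_cast (show 2 ≤ m by omega)
    linarith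
  field_simp
  linear_combination hc
end

section
/- For m > 2d, the number of admissible pinnacle sets with maximum m and cardinality d equals the number of (m−d, d−1) ballot sequences. -/
def ballotSeqs (p q : ℕ) : Finset (Fin (p + q) → Bool) :=
  Finset.univ.filter fun β =>
    (Finset.univ.filter fun i => β i = true).card = p ∧
    ∀ i : Fin (p + q),
      (Finset.univ.filter fun j => j ≤ i ∧ β j = false).card <
        (Finset.univ.filter fun j => j ≤ i ∧ β j = true).card

lemma adm_iff_emb (S : Finset ℕ) :
    Admissible S ↔ ∀ i : Fin S.card, 2 * ((i : ℕ) + 1) < S.orderEmbOfFin rfl i := by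
  constructor
  · intro hA i
    have hi : (i : ℕ) < (S.sort (· ≤ ·)).length := by
      rw [Finset.length_sort]; exact i.2
    exact hA i hi
  · intro hA i hi
    have hi' : i < S.card := by rwa [Finset.length_sort] at hi
    exact hA ⟨i, hi'⟩

lemma card_filter_le_emb (S : Finset ℕ) (t : ℕ) :
    (S.filter (· ≤ t)).card =
      (Finset.univ.filter fun i : Fin S.card => S.orderEmbOfFin rfl i ≤ t).card := by
  symm
  apply Finset.card_bij (fun i _ => S.orderEmbOfFin rfl i)
  · intro i hi
    simp only [Finset.mem_filter, Finset.mem_univ, true_and] at hi ⊢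
    exact ⟨Finset.orderEmbOfFin_mem S rfl i, hi⟩
  · intro a _ b _ hab
    exact (S.orderEmbOfFin rfl).injective hab
  · intro s hs
    simp only [Finset.mem_filter] at hs
    have : s ∈ Set.range (S.orderEmbOfFin rfl) := by
      rw [Finset.range_orderEmbOfFin]; exact hs.1
    obtain ⟨i, hi⟩ := this
    exact ⟨i, by simp [hi, hs.2], hi⟩

lemma adm_iff (S : Finset ℕ) :
    Admissible S ↔ ∀ t : ℕ, 1 ≤ t → 2 * (S.filter (· ≤ t)).card < t := by
  rw [adm_iff_emb]
  constructor
  · intro hA t ht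
    rw [card_filter_le_emb]
    by_cases h0 : (Finset.univ.filter fun i : Fin S.card => S.orderEmbOfFin rfl i ≤ t).card = 0
    · omega
    · set k := (Finset.univ.filter fun i : Fin S.card => S.orderEmbOfFin rfl i ≤ t).card with hk
      have hpos : 1 ≤ k := by omega
      have hkd : k ≤ S.card := by
        calc k ≤ (Finset.univ : Finset (Fin S.card)).card :=
              Finset.card_le_univ _
          _ = S.card := by simp
      have hlt : k - 1 < S.card := by omega
      have hmem : (⟨k - 1, hlt⟩ : Fin S.card) ∈
          Finset.univ.filter fun i : Fin S.card => S.orderEmbOfFin rfl i ≤ t := by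
        by_contra hmem
        have hgt : t < S.orderEmbOfFin rfl ⟨k - 1, hlt⟩ := by
          simp only [Finset.mem_filter, Finset.mem_univ, true_and, not_le] at hmem
          exact hmem
        have hsub : (Finset.univ.filter fun i : Fin S.card => S.orderEmbOfFin rfl i ≤ t) ⊆
            Finset.Iio ⟨k - 1, hlt⟩ := by
          intro j hj
          simp only [Finset.mem_filter, Finset.mem_univ, true_and] at hj
          rw [Finset.mem_Iio]
          exact (S.orderEmbOfFin rfl).strictMono.lt_iff_lt.mp (lt_of_le_of_lt hj hgt)
        have hle := Finset.card_le_card hsub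
        rw [Fin.card_Iio] at hle
        simp only [← hk] at hle
        omega
      simp only [Finset.mem_filter, Finset.mem_univ, true_and] at hmem
      have h1 := hA ⟨k - 1, hlt⟩
      simp only [Fin.val_mk] at h1
      omega
  · intro H i
    have h1 : 1 ≤ S.orderEmbOfFin rfl i := by
      by_contra h0
      have hi : i ∈ Finset.univ.filter fun j : Fin S.card => S.orderEmbOfFin rfl j ≤ 1 := by
        simp only [Finset.mem_filter, Finset.mem_univ, true_and]; omega
      have hpos : 0 < (Finset.univ.filter fun j : Fin S.card => S.orderEmbOfFin rfl j ≤ 1).card :=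
        Finset.card_pos.mpr ⟨i, hi⟩
      have h2 := H 1 le_rfl
      rw [card_filter_le_emb] at h2
      omega
    have hsub : Finset.Iic i ⊆
        Finset.univ.filter fun j : Fin S.card =>
          S.orderEmbOfFin rfl j ≤ S.orderEmbOfFin rfl i := by
      intro j hj
      rw [Finset.mem_Iic] at hj
      simp only [Finset.mem_filter, Finset.mem_univ, true_and]
      exact (S.orderEmbOfFin rfl).monotone hj
    have hcard := Finset.card_le_card hsub
    rw [Fin.card_Iic] at hcard
    have h2 := H (S.orderEmbOfFin rfl i) h1
    rw [card_filter_le_emb] at h2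
    omega

lemma adm_three (S : Finset ℕ) (hA : Admissible S) {s : ℕ} (hs : s ∈ S) : 3 ≤ s := by
  rw [adm_iff] at hA
  by_contra hlt
  have hmem : s ∈ S.filter (· ≤ 2) := Finset.mem_filter.mpr ⟨hs, by omega⟩
  have h1 := hA 2 (by omega)
  have h2 := Finset.card_pos.mpr ⟨s, hmem⟩
  omega

lemma card_shift (N : ℕ) (T : Finset ℕ) (hT : ∀ s ∈ T, 1 ≤ s ∧ s ≤ N) :
    (Finset.univ.filter fun j : Fin N => (j : ℕ) + 1 ∈ T).card = T.card := by
  refine Finset.card_bij (fun j _ => (j : ℕ) + 1) ?_ ?_ ?_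
  · intro j hj
    simpa using (Finset.mem_filter.mp hj).2
  · intro a _ b _ hab
    exact Fin.val_injective (by omega)
  · intro s hs
    obtain ⟨h1, h2⟩ := hT s hs
    refine ⟨⟨s - 1, by omega⟩, ?_, by simp; omega⟩
    simp only [Finset.mem_filter, Finset.mem_univ, true_and]
    have : s - 1 + 1 = s := by omega
    rw [this]; exact hs

lemma bool_partition {n : ℕ} (β : Fin n → Bool) :
    (Finset.univ.filter fun i => β i = true).card
      + (Finset.univ.filter fun i => β i = false).card = n := by
  have := Finset.card_filter_add_card_filter_not
    (s := (Finset.univ : Finset (Fin n))) (p := fun i => β i = true)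
  simpa [Bool.not_eq_true] using this

lemma bool_partition_le {n : ℕ} (β : Fin n → Bool) (i : Fin n) :
    (Finset.univ.filter fun j => j ≤ i ∧ β j = true).card
      + (Finset.univ.filter fun j => j ≤ i ∧ β j = false).card = (i : ℕ) + 1 := by
  have hIic : (Finset.univ.filter fun j : Fin n => j ≤ i) = Finset.Iic i := by
    ext j; simp
  have H := Finset.card_filter_add_card_filter_not
    (s := Finset.univ.filter fun j : Fin n => j ≤ i) (p := fun j => β j = true)
  rw [Finset.filter_filter, Finset.filter_filter, hIic, Fin.card_Iic] at H
  rw [← H]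
  congr 1
  congr 1
  apply Finset.filter_congr; intro j _; simp [Bool.not_eq_true]

lemma toFun_mem (m d : ℕ) (hd : 0 < d) (h : 2 * d < m) (S : Finset ℕ)
    (hA : Admissible S) (hc : S.card = d) (hm : m ∈ S) (hb : ∀ s ∈ S, s ≤ m) :
    (fun i : Fin ((m - d) + (d - 1)) => !decide ((i : ℕ) + 1 ∈ S))
      ∈ ballotSeqs (m - d) (d - 1) := by
  have hN : (m - d) + (d - 1) = m - 1 := by omega
  simp only [ballotSeqs, Finset.mem_filter, Finset.mem_univ, true_and]
  constructor
  · have hpred : (Finset.univ.filter fun i : Fin ((m - d) + (d - 1)) =>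
        (!decide ((i : ℕ) + 1 ∈ S)) = false)
        = Finset.univ.filter fun i : Fin ((m - d) + (d - 1)) => (i : ℕ) + 1 ∈ S.erase m := by
      apply Finset.filter_congr; intro j _
      have hjb : (j : ℕ) + 1 < m := by have := j.2; omega
      simp only [Bool.not_eq_false', decide_eq_true_eq, Finset.mem_erase]
      constructor
      · intro hj; exact ⟨by omega, hj⟩
      · exact fun hj => hj.2
    have hcs := card_shift ((m - d) + (d - 1)) (S.erase m) (by
      intro s hs
      rw [Finset.mem_erase] at hs
      have h3 := adm_three S hA hs.2
      have h4 := hb s hs.2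
      constructor <;> omega)
    have hfalse : (Finset.univ.filter fun i : Fin ((m - d) + (d - 1)) =>
        (!decide ((i : ℕ) + 1 ∈ S)) = false).card = d - 1 := by
      rw [hpred, hcs, Finset.card_erase_of_mem hm, hc]
    have hpart := bool_partition (fun i : Fin ((m - d) + (d - 1)) => !decide ((i : ℕ) + 1 ∈ S))
    omega
  · intro i
    have hfi : (Finset.univ.filter fun j =>
        j ≤ i ∧ (!decide ((j : ℕ) + 1 ∈ S)) = false).card
        = (S.filter (· ≤ (i : ℕ) + 1)).card := by
      have hpred : (Finset.univ.filter fun j =>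
          j ≤ i ∧ (!decide ((j : ℕ) + 1 ∈ S)) = false)
          = Finset.univ.filter fun j : Fin ((m - d) + (d - 1)) =>
              (j : ℕ) + 1 ∈ S.filter (· ≤ (i : ℕ) + 1) := by
        apply Finset.filter_congr; intro j _
        simp only [Bool.not_eq_false', decide_eq_true_eq, Finset.mem_filter, Fin.le_def]
        constructor
        · rintro ⟨h1, h2⟩; exact ⟨h2, by omega⟩
        · rintro ⟨h1, h2⟩; exact ⟨by omega, h1⟩
      rw [hpred]
      apply card_shift
      intro s hs
      rw [Finset.mem_filter] at hs
      have h3 := adm_three S hA hs.1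
      have hi2 := i.2
      have h4 := hs.2
      constructor <;> omega
    have hadm := (adm_iff S).mp hA ((i : ℕ) + 1) (by omega)
    have hpart := bool_partition_le (fun j : Fin ((m - d) + (d - 1)) =>
      !decide ((j : ℕ) + 1 ∈ S)) i
    omega

lemma invFun_mem (m d : ℕ) (hd : 0 < d) (h : 2 * d < m)
    (β : Fin ((m - d) + (d - 1)) → Bool) (hβ : β ∈ ballotSeqs (m - d) (d - 1))
    (S : Finset ℕ)
    (hS : S = insert m ((Finset.univ.filter fun j => β j = false).image
      fun j : Fin ((m - d) + (d - 1)) => (j : ℕ) + 1)) :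
    Admissible S ∧ S.card = d ∧ m ∈ S ∧ ∀ s ∈ S, s ≤ m := by
  have hN : (m - d) + (d - 1) = m - 1 := by omega
  simp only [ballotSeqs, Finset.mem_filter, Finset.mem_univ, true_and] at hβ
  obtain ⟨hp, hballot⟩ := hβ
  have hinj : Function.Injective fun j : Fin ((m - d) + (d - 1)) => (j : ℕ) + 1 := by
    intro a b hab
    simp only at hab
    exact Fin.val_injective (by omega)
  have hTmem : ∀ s : ℕ,
      s ∈ (Finset.univ.filter fun j => β j = false).image (fun j : Fin ((m - d) + (d - 1)) => (j : ℕ) + 1) ↔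
        ∃ j, β j = false ∧ (j : ℕ) + 1 = s := by
    intro s
    simp [Finset.mem_image, Finset.mem_filter]
  have hTb : ∀ s ∈ (Finset.univ.filter fun j => β j = false).image
      (fun j : Fin ((m - d) + (d - 1)) => (j : ℕ) + 1), 1 ≤ s ∧ s ≤ m - 1 := by
    intro s hs
    rw [hTmem] at hs
    obtain ⟨j, _, hj⟩ := hs
    have := j.2
    omega
  have hmT : m ∉ (Finset.univ.filter fun j => β j = false).image
      (fun j : Fin ((m - d) + (d - 1)) => (j : ℕ) + 1) := by
    intro hmm
    rw [hTmem] at hmm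
    obtain ⟨j, _, hj⟩ := hmm
    have := j.2
    omega
  have hTcard : ((Finset.univ.filter fun j => β j = false).image
      (fun j : Fin ((m - d) + (d - 1)) => (j : ℕ) + 1)).card = d - 1 := by
    rw [Finset.card_image_of_injective _ hinj]
    have := bool_partition β
    omega
  have hScard : S.card = d := by
    rw [hS, Finset.card_insert_of_notMem hmT, hTcard]; omega
  have hmS : m ∈ S := by rw [hS]; exact Finset.mem_insert_self _ _
  have hSb : ∀ s ∈ S, s ≤ m := by
    intro s hs
    rw [hS, Finset.mem_insert] at hs
    rcases hs with rfl | hs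
    · exact le_rfl
    · exact le_trans (hTb s hs).2 (by omega)
  refine ⟨?_, hScard, hmS, hSb⟩
  rw [adm_iff]
  intro t ht
  by_cases hts : t ≤ m - 1
  · have hlt : t - 1 < (m - d) + (d - 1) := by omega
    have hfi : (S.filter (· ≤ t)).card
        = (Finset.univ.filter fun j => j ≤ (⟨t - 1, hlt⟩ : Fin _) ∧ β j = false).card := by
      have hpred : (Finset.univ.filter fun j => j ≤ (⟨t - 1, hlt⟩ : Fin _) ∧ β j = false)
          = Finset.univ.filter fun j : Fin ((m - d) + (d - 1)) =>
              (j : ℕ) + 1 ∈ S.filter (· ≤ t) := by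
        apply Finset.filter_congr; intro j _
        simp only [Finset.mem_filter, Fin.le_def, Fin.val_mk]
        constructor
        · rintro ⟨h1, h2⟩
          refine ⟨?_, by omega⟩
          rw [hS]
          exact Finset.mem_insert_of_mem ((hTmem _).mpr ⟨j, h2, rfl⟩)
        · rintro ⟨h1, h2⟩
          rw [hS, Finset.mem_insert] at h1
          rcases h1 with h1 | h1
          · omega
          · rw [hTmem] at h1
            obtain ⟨j', hj', hjj⟩ := h1
            have hje : j' = j := Fin.val_injective (by omega)
            exact ⟨by omega, hje ▸ hj'⟩
      rw [hpred]
      symm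
      apply card_shift
      intro s hs
      rw [Finset.mem_filter] at hs
      have hne : s ≠ m := by omega
      have hsT : s ∈ (Finset.univ.filter fun j => β j = false).image
          (fun j : Fin ((m - d) + (d - 1)) => (j : ℕ) + 1) := by
        rw [hS, Finset.mem_insert] at hs
        rcases hs.1 with h1 | h1
        · exact absurd h1 hne
        · exact h1
      have := hTb s hsT
      have h4 := hs.2
      constructor <;> omega
    have hb := hballot ⟨t - 1, hlt⟩
    have hpart := bool_partition_le β ⟨t - 1, hlt⟩
    simp only [Fin.val_mk] at hpart
    omega
  · have hfle : (S.filter (· ≤ t)).card ≤ S.card := Finset.card_filter_le _ _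
    omega

lemma left_inv_eq (m d : ℕ) (hd : 0 < d) (h : 2 * d < m) (S : Finset ℕ)
    (hA : Admissible S) (hc : S.card = d) (hm : m ∈ S) (hb : ∀ s ∈ S, s ≤ m) :
    insert m ((Finset.univ.filter fun j : Fin ((m - d) + (d - 1)) =>
      (!decide ((j : ℕ) + 1 ∈ S)) = false).image fun j : Fin ((m - d) + (d - 1)) => (j : ℕ) + 1) = S := by
  ext s
  simp only [Finset.mem_insert, Finset.mem_image, Finset.mem_filter, Finset.mem_univ,
    true_and, Bool.not_eq_false', decide_eq_true_eq]
  constructor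
  · rintro (rfl | ⟨j, hj, rfl⟩)
    · exact hm
    · exact hj
  · intro hs
    by_cases hsm : s = m
    · left; exact hsm
    · right
      have h3 := adm_three S hA hs
      have hsle := hb s hs
      have hlt : s - 1 < (m - d) + (d - 1) := by omega
      refine ⟨⟨s - 1, hlt⟩, ?_, by simp; omega⟩
      simp only [Fin.val_mk]
      have hss : s - 1 + 1 = s := by omega
      rw [hss]
      exact hs

lemma right_inv_eq (m d : ℕ) (hd : 0 < d) (h : 2 * d < m)
    (β : Fin ((m - d) + (d - 1)) → Bool) :
    (fun i : Fin ((m - d) + (d - 1)) => !decide ((i : ℕ) + 1 ∈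
      insert m ((Finset.univ.filter fun j => β j = false).image fun j : Fin ((m - d) + (d - 1)) => (j : ℕ) + 1)))
      = β := by
  funext i
  have hne : (i : ℕ) + 1 ≠ m := by have := i.2; omega
  have hmem : ((i : ℕ) + 1 ∈ insert m ((Finset.univ.filter fun j => β j = false).image
      fun j : Fin ((m - d) + (d - 1)) => (j : ℕ) + 1)) ↔ β i = false := by
    simp only [Finset.mem_insert, Finset.mem_image, Finset.mem_filter, Finset.mem_univ,
      true_and]
    constructor
    · rintro (heq | ⟨j, hj, hji⟩)
      · exact absurd heq hne
      · have hje : j = i := Fin.val_injective (by omega)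
        exact hje ▸ hj
    · intro hbf; right; exact ⟨i, hbf, rfl⟩
  cases hβi : β i
  · simp [hmem, hβi]
  · simp [hmem, hβi]

/-- For `m > 2d`, the number of admissible pinnacle sets with maximum `m` and size `d`
equals the number of `(m−d, d−1)` ballot sequences. -/
theorem stmt10 (m d : ℕ) (hd : 0 < d) (h : 2 * d < m) :
    Nat.card {S : Finset ℕ //
        Admissible S ∧ S.card = d ∧ m ∈ S ∧ ∀ s ∈ S, s ≤ m} =
      (ballotSeqs (m - d) (d - 1)).card := by
  rw [← Nat.card_eq_finsetCard]
  apply Nat.card_congr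
  exact
    { toFun := fun S => ⟨fun i => !decide ((i : ℕ) + 1 ∈ S.1),
        toFun_mem m d hd h S.1 S.2.1 S.2.2.1 S.2.2.2.1 S.2.2.2.2⟩
      invFun := fun β => ⟨insert m ((Finset.univ.filter fun j => β.1 j = false).image
          fun j : Fin ((m - d) + (d - 1)) => (j : ℕ) + 1),
        invFun_mem m d hd h β.1 β.2 _ rfl⟩
      left_inv := fun S => Subtype.ext
        (left_inv_eq m d hd h S.1 S.2.1 S.2.2.1 S.2.2.2.1 S.2.2.2.2)
      right_inv := fun β => Subtype.ext (right_inv_eq m d hd h β.1) }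
end

section
/- For m > 2d, the map η sending a (m−d, d−1) ballot sequence β = β_1...β_{m−1} to the set {i : β_i = Y} ∪ {m} is a well-defined bijection from the set of (m−d, d−1) ballot sequences to the set of admissible pinnacle sets with maximum m and cardinality d. -/
open Finset

lemma list_count_lower (L : List ℕ) (S : Finset ℕ) (hnd : L.Nodup)
    (hsort : L.Pairwise (· ≤ ·)) (hmem : ∀ x, x ∈ L ↔ x ∈ S) (t i : ℕ)
    (h : i < L.length) (hle : L.get ⟨i, h⟩ ≤ t) :
    i + 1 ≤ (S.filter (· ≤ t)).card := by
  classical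
  set f : Fin (i+1) → ℕ := fun j => L.get ⟨j.1, lt_of_le_of_lt (Nat.lt_succ_iff.mp j.2) h⟩ with hf
  have hinj : Function.Injective f := by
    intro a b hab
    have h1 := List.nodup_iff_injective_get.mp hnd hab
    have h2 : (a : ℕ) = b := by simpa [Fin.ext_iff] using h1
    exact Fin.ext h2
  have hsub : Finset.univ.image f ⊆ S.filter (· ≤ t) := by
    intro x hx
    simp only [mem_image, mem_univ, true_and] at hx
    obtain ⟨j, rfl⟩ := hx
    refine mem_filter.mpr ⟨(hmem _).mp (List.get_mem _ _), ?_⟩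
    rcases Nat.lt_or_ge j.1 i with hj | hj
    · exact le_trans (hsort.rel_get_of_lt (Fin.mk_lt_mk.mpr hj)) hle
    · have he : (⟨j.1, lt_of_le_of_lt (Nat.lt_succ_iff.mp j.2) h⟩ : Fin L.length) = ⟨i, h⟩ :=
        Fin.ext (le_antisymm (Nat.lt_succ_iff.mp j.2) hj)
      simp only [hf, he]; exact hle
  calc i + 1 = (Finset.univ.image f).card := by
        rw [Finset.card_image_of_injective _ hinj, card_univ, Fintype.card_fin]
    _ ≤ _ := card_le_card hsub

lemma list_count_upper (L : List ℕ) (S : Finset ℕ)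
    (hsort : L.Pairwise (· ≤ ·)) (hmem : ∀ x, x ∈ L ↔ x ∈ S) (t i : ℕ)
    (h : i < L.length) (hgt : t < L.get ⟨i, h⟩) :
    (S.filter (· ≤ t)).card ≤ i := by
  classical
  set f : Fin i → ℕ := fun j => L.get ⟨j.1, lt_trans j.2 h⟩ with hf
  have hsub : S.filter (· ≤ t) ⊆ Finset.univ.image f := by
    intro x hx
    rcases mem_filter.mp hx with ⟨hxS, hxt⟩
    obtain ⟨j, hj⟩ := List.mem_iff_get.mp ((hmem x).mpr hxS)
    have hji : j.1 < i := by
      by_contra hge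
      push_neg at hge
      have hle : L.get ⟨i, h⟩ ≤ L.get j := by
        rcases Nat.lt_or_ge i j.1 with hlt | hge2
        · exact hsort.rel_get_of_lt (by exact hlt)
        · have : (⟨i, h⟩ : Fin L.length) = j := Fin.ext (le_antisymm hge hge2)
          rw [this]
      rw [hj] at hle
      omega
    refine mem_image.mpr ⟨⟨j.1, hji⟩, mem_univ _, ?_⟩
    rw [← hj]
  calc (S.filter (· ≤ t)).card ≤ (Finset.univ.image f).card := card_le_card hsub
    _ ≤ (Finset.univ : Finset (Fin i)).card := card_image_le
    _ = i := by simp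

lemma admissible_iff_cnt (S : Finset ℕ) :
    Admissible S ↔ ∀ t, 0 < (S.filter (· ≤ t)).card → 2 * (S.filter (· ≤ t)).card < t := by
  classical
  have hnd := S.sort_nodup (· ≤ ·)
  have hsort := S.pairwise_sort (· ≤ ·)
  have hmem : ∀ x, x ∈ S.sort (· ≤ ·) ↔ x ∈ S := fun x => Finset.mem_sort _
  constructor
  · intro hA t hpos
    set k := (S.filter (· ≤ t)).card with hk
    have hkS : k ≤ (S.sort (· ≤ ·)).length := by
      rw [Finset.length_sort]; exact card_le_card (filter_subset _ _)
    have hlt : k - 1 < (S.sort (· ≤ ·)).length := by omega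
    have hle : (S.sort (· ≤ ·)).get ⟨k-1, hlt⟩ ≤ t := by
      by_contra hgt
      push_neg at hgt
      have := list_count_upper _ S hsort hmem t (k-1) hlt hgt
      omega
    have := hA (k-1) hlt
    omega
  · intro hC i h
    have h1 : i + 1 ≤ (S.filter (· ≤ (S.sort (· ≤ ·)).get ⟨i, h⟩)).card :=
      list_count_lower _ S hnd hsort hmem _ i h le_rfl
    have h2 := hC ((S.sort (· ≤ ·)).get ⟨i, h⟩) (by omega)
    omega

lemma succ_val_inj {n : ℕ} : Function.Injective (fun j : Fin n => j.1 + 1) := by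
  intro a b hab
  simp only [add_left_inj] at hab
  exact Fin.ext hab

lemma prefix_split {n : ℕ} (β : Fin n → Bool) (i : Fin n) :
    (Finset.univ.filter fun j => j ≤ i ∧ β j = false).card
      + (Finset.univ.filter fun j => j ≤ i ∧ β j = true).card = i.1 + 1 := by
  classical
  have h1 : (Finset.univ.filter fun j => j ≤ i ∧ β j = false)
      = (Finset.univ.filter (· ≤ i)).filter (fun j => ¬ (β j = true)) := by
    rw [filter_filter]; simp
  have h2 : (Finset.univ.filter fun j => j ≤ i ∧ β j = true)
      = (Finset.univ.filter (· ≤ i)).filter (fun j => β j = true) := by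
    rw [filter_filter]
  rw [h1, h2, Nat.add_comm, Finset.card_filter_add_card_filter_not]
  have : Finset.univ.filter (· ≤ i) = Finset.Iic i := by ext; simp
  rw [this, Fin.card_Iic]

lemma image_filter_card {n : ℕ} (F : Finset (Fin n)) (t : ℕ) :
    ((F.image fun j => j.1 + 1).filter (· ≤ t)).card = (F.filter fun j => j.1 + 1 ≤ t).card := by
  rw [Finset.filter_image]
  exact Finset.card_image_of_injective _ succ_val_inj

lemma false_count_eq {n : ℕ} (β : Fin n → Bool) (i : Fin n) :
    (Finset.univ.filter fun j => j ≤ i ∧ β j = false).card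
      = (((Finset.univ.filter fun j => β j = false).image fun j => j.1 + 1).filter
          (· ≤ i.1 + 1)).card := by
  rw [image_filter_card, filter_filter]
  congr 1
  ext j
  simp only [Fin.le_def, and_comm, Nat.succ_le_succ_iff]

/-- For `m > 2d`, the map `η(β) = {i : β_i = Y} ∪ {m}` (positions `1`-indexed) is a
bijection from `(m−d, d−1)` ballot sequences onto admissible pinnacle sets with
maximum `m` and cardinality `d`. -/
theorem stmt11 (m d : ℕ) (hd : 0 < d) (h : 2 * d < m) :
    Set.BijOn
      (fun β : Fin ((m - d) + (d - 1)) → Bool =>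
        (Finset.univ.filter fun i => β i = false).image (fun i => i.val + 1) ∪
          ({m} : Finset ℕ))
      (ballotSeqs (m - d) (d - 1) : Set (Fin ((m - d) + (d - 1)) → Bool))
      {S : Finset ℕ | Admissible S ∧ S.card = d ∧ m ∈ S ∧ ∀ s ∈ S, s ≤ m} := by
  classical
  refine ⟨?_, ?_, ?_⟩
  · -- MapsTo
    intro β hβ
    simp only [Finset.mem_coe, ballotSeqs, Finset.mem_filter, Finset.mem_univ, true_and] at hβ
    obtain ⟨hp, hb⟩ := hβ
    simp only [Set.mem_setOf_eq]
    set F := Finset.univ.filter (fun i => β i = false) with hF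
    set Fimg := F.image (fun j : Fin ((m - d) + (d - 1)) => j.1 + 1) with hFimgdef
    have hsplit : (Finset.univ.filter fun i => β i = true).card + F.card = (m-d)+(d-1) := by
      have := Finset.card_filter_add_card_filter_not
        (s := (Finset.univ : Finset (Fin ((m-d)+(d-1))))) (p := fun i => β i = true)
      simpa [hF] using this
    have hFcard : F.card = d - 1 := by omega
    have hFimgcard : Fimg.card = d - 1 := by
      rw [hFimgdef, Finset.card_image_of_injective _ succ_val_inj, hFcard]
    have hmem_img : ∀ a ∈ Fimg, 1 ≤ a ∧ a ≤ m - 1 := by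
      intro a ha
      simp only [hFimgdef, Finset.mem_image] at ha
      obtain ⟨j, _, rfl⟩ := ha
      have := j.2
      omega
    have hmFimg : m ∉ Fimg := by
      intro hm; have := hmem_img m hm; omega
    have hdisj : Disjoint Fimg ({m} : Finset ℕ) :=
      Finset.disjoint_singleton_right.mpr hmFimg
    have hcount : ∀ t, ((Fimg ∪ {m}).filter (· ≤ t)).card
        = (Fimg.filter (· ≤ t)).card + (({m} : Finset ℕ).filter (· ≤ t)).card := by
      intro t
      rw [Finset.filter_union, Finset.card_union_of_disjoint]
      exact Finset.disjoint_filter_filter hdisj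
    refine ⟨?_, ?_, ?_, ?_⟩
    · -- Admissible
      rw [admissible_iff_cnt]
      intro t hpos
      rcases Nat.lt_or_ge t m with htm | htm
      · have hsing : ({m} : Finset ℕ).filter (· ≤ t) = ∅ := by
          ext a; simp only [Finset.mem_filter, Finset.mem_singleton, Finset.notMem_empty,
            iff_false, not_and]
          rintro rfl; omega
        rw [hcount t, hsing] at hpos ⊢
        simp only [Finset.card_empty, Nat.add_zero] at hpos ⊢
        obtain ⟨x, hx⟩ := Finset.card_pos.mp hpos
        rcases Finset.mem_filter.mp hx with ⟨hx1, hx2⟩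
        have hxb := hmem_img x hx1
        have htn : t - 1 < (m - d) + (d - 1) := by omega
        set i : Fin ((m-d)+(d-1)) := ⟨t-1, htn⟩ with hi
        have hsp := prefix_split β i
        have hfc := false_count_eq β i
        have hballot := hb i
        have hi1 : i.1 + 1 = t := by simp only [hi]; omega
        rw [hi1] at hfc hsp
        rw [← hF, ← hFimgdef] at hfc
        omega
      · rw [hcount t]
        have h1 : (Fimg.filter (· ≤ t)).card ≤ d - 1 :=
          le_trans (Finset.card_filter_le _ _) hFimgcard.le
        have h2 : (({m}:Finset ℕ).filter (· ≤ t)).card ≤ 1 :=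
          le_trans (Finset.card_filter_le _ _) (by simp)
        omega
    · rw [Finset.card_union_of_disjoint hdisj, hFimgcard, Finset.card_singleton]
      omega
    · exact Finset.mem_union_right _ (Finset.mem_singleton_self m)
    · intro s hs
      rcases Finset.mem_union.mp hs with hs | hs
      · have := hmem_img s hs; omega
      · rw [Finset.mem_singleton.mp hs]
  · -- InjOn
    intro β1 h1 β2 h2 heq
    simp only at heq
    have hnotmem : ∀ β : Fin ((m - d) + (d - 1)) → Bool,
        m ∉ (Finset.univ.filter fun i => β i = false).image (fun i => i.val + 1) := by
      intro β hm
      simp only [Finset.mem_image] at hm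
      obtain ⟨j, _, hj⟩ := hm
      have := j.2
      omega
    have him : ((Finset.univ.filter fun i => β1 i = false).image fun i => i.val + 1)
        = ((Finset.univ.filter fun i => β2 i = false).image fun i => i.val + 1) := by
      have hc := congrArg (fun s => Finset.erase s m) heq
      simpa [Finset.erase_union_distrib, Finset.erase_singleton,
        Finset.erase_eq_of_notMem (hnotmem β1), Finset.erase_eq_of_notMem (hnotmem β2)]
        using hc
    have hFeq : (Finset.univ.filter fun i => β1 i = false)
        = (Finset.univ.filter fun i => β2 i = false) :=
      Finset.image_injective succ_val_inj him
    funext j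
    have hj := Finset.ext_iff.mp hFeq j
    simp only [Finset.mem_filter, Finset.mem_univ, true_and] at hj
    cases h1j : β1 j <;> cases h2j : β2 j <;> simp_all
  · -- SurjOn
    intro S hS
    simp only [Set.mem_setOf_eq] at hS
    obtain ⟨hAdm, hcard, hmS, hbd⟩ := hS
    have hcnt := (admissible_iff_cnt S).mp hAdm
    have hgt2 : ∀ s ∈ S, 2 < s := by
      intro s hs
      have hpos : 0 < (S.filter (· ≤ s)).card :=
        Finset.card_pos.mpr ⟨s, Finset.mem_filter.mpr ⟨hs, le_rfl⟩⟩
      have := hcnt s hpos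
      omega
    set β : Fin ((m-d)+(d-1)) → Bool := fun i => decide ((i.1+1) ∉ S) with hβ
    have hβfalse : ∀ i : Fin ((m-d)+(d-1)), β i = false ↔ (i.1 + 1) ∈ S := by
      intro i; simp [hβ]
    have hFimg : ((Finset.univ.filter fun i => β i = false).image fun i => i.val + 1)
        = S.erase m := by
      ext a
      simp only [Finset.mem_image, Finset.mem_filter, Finset.mem_univ, true_and,
        Finset.mem_erase]
      constructor
      · rintro ⟨j, hjf, rfl⟩
        have hjS := (hβfalse j).mp hjf
        have := j.2
        exact ⟨by omega, hjS⟩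
      · rintro ⟨hne, haS⟩
        have h2a := hgt2 a haS
        have ham := hbd a haS
        have ha1 : a - 1 < (m-d)+(d-1) := by omega
        refine ⟨⟨a - 1, ha1⟩, ?_, by show a - 1 + 1 = a; omega⟩
        exact (hβfalse _).mpr (by simpa [show a - 1 + 1 = a by omega] using haS)
    have hη : ((Finset.univ.filter fun i => β i = false).image fun i => i.val + 1)
        ∪ ({m} : Finset ℕ) = S := by
      rw [hFimg, Finset.union_comm, ← Finset.insert_eq, Finset.insert_erase hmS]
    refine ⟨β, ?_, hη⟩
    simp only [Finset.mem_coe, ballotSeqs, Finset.mem_filter, Finset.mem_univ, true_and]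
    have hFcard : (Finset.univ.filter fun i => β i = false).card = d - 1 := by
      have hc : (Finset.univ.filter fun i => β i = false).card
          = ((Finset.univ.filter fun i => β i = false).image fun i : Fin ((m-d)+(d-1)) => i.val + 1).card :=
        (Finset.card_image_of_injective _ succ_val_inj).symm
      rw [hc, hFimg, Finset.card_erase_of_mem hmS, hcard]
    have hsplit : (Finset.univ.filter fun i => β i = true).card
        + (Finset.univ.filter fun i => β i = false).card = (m-d)+(d-1) := by
      have := Finset.card_filter_add_card_filter_not
        (s := (Finset.univ : Finset (Fin ((m-d)+(d-1))))) (p := fun i => β i = true)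
      simpa using this
    constructor
    · omega
    · intro i
      have hsp := prefix_split β i
      have hfc := false_count_eq β i
      rw [hFimg] at hfc
      have ht : i.1 + 1 ≤ m - 1 := by have := i.2; omega
      have hee : (S.erase m).filter (· ≤ i.1+1) = S.filter (· ≤ i.1+1) := by
        ext a
        simp only [Finset.mem_filter, Finset.mem_erase]
        constructor
        · rintro ⟨⟨_, h1⟩, h2⟩; exact ⟨h1, h2⟩
        · rintro ⟨h1, h2⟩; exact ⟨⟨by omega, h1⟩, h2⟩
      rw [hee] at hfc
      rcases Nat.eq_zero_or_pos (S.filter (· ≤ i.1+1)).card with hz | hz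
      · omega
      · have := hcnt (i.1+1) hz
        omega
end

section
/- For 3 ≤ l ≤ n, the number of permutations of [n] with pinnacle set exactly {l} equals 2^{n−2}·(2^{l−2} − 1). -/
/-- Peak values of a list. -/
def peaks : List ℕ → List ℕ
  | a :: b :: c :: t => (if a < b ∧ c < b then [b] else []) ++ peaks (b :: c :: t)
  | _ => []

@[simp] lemma peaks_nil : peaks [] = [] := rfl
@[simp] lemma peaks_single (a : ℕ) : peaks [a] = [] := rfl
@[simp] lemma peaks_pair (a b : ℕ) : peaks [a, b] = [] := rfl

lemma peaks_cons_cons_cons (a b c : ℕ) (t : List ℕ) :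
    peaks (a :: b :: c :: t) =
      (if a < b ∧ c < b then [b] else []) ++ peaks (b :: c :: t) := rfl

lemma peaks_cons_sublist : ∀ (a : ℕ) (L : List ℕ), List.Sublist (peaks (a :: L)) L
  | _, [] => by simp
  | _, [b] => by simp
  | a, b :: c :: t => by
    rw [peaks_cons_cons_cons]
    have ih := peaks_cons_sublist b (c :: t)
    split
    · exact List.Sublist.cons₂ b ih
    · exact ih.trans (List.sublist_cons_self b (c :: t))

lemma peaks_sublist (L : List ℕ) : List.Sublist (peaks L) L := by
  cases L with
  | nil => simp
  | cons a t => exact (peaks_cons_sublist a t).trans (List.sublist_cons_self a t)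

lemma peaks_split (m : ℕ) : ∀ (LA LB : List ℕ), (∀ x ∈ LA, x < m) → (∀ x ∈ LB, x < m) →
    peaks (LA ++ m :: LB) =
      peaks LA ++ (if LA = [] ∨ LB = [] then [] else [m]) ++ peaks LB
  | [], [], _, _ => by simp
  | [], [b], _, _ => by simp
  | [], b :: c :: t, _, hB => by
    have hb : b < m := hB b (by simp)
    simp only [List.nil_append, peaks_cons_cons_cons, peaks_nil]
    rw [if_neg (by omega)]
    simp
  | [a], LB, hA, hB => by
    cases LB with
    | nil => simp
    | cons b t =>
      have hb : b < m := hB b (by simp)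
      have ha : a < m := hA a (by simp)
      have ih : peaks (m :: b :: t) = peaks (b :: t) := by
        have h2 := peaks_split m [] (b :: t) (by simp) hB
        simpa using h2
      show peaks (a :: m :: b :: t) = _
      rw [peaks_cons_cons_cons, if_pos ⟨ha, hb⟩, ih]
      simp
  | a :: b :: t, LB, hA, hB => by
    have ih := peaks_split m (b :: t) LB (fun x hx => hA x (by simp [hx])) hB
    cases t with
    | nil =>
      have hb : b < m := hA b (by simp)
      simp only [List.cons_append, List.nil_append, peaks_cons_cons_cons] at ih ⊢
      rw [if_neg (by omega), ih]
      simp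
    | cons c t' =>
      simp only [List.cons_append, peaks_cons_cons_cons] at ih ⊢
      rw [ih]
      simp

lemma peaks_cons_of_gt {m : ℕ} {L : List ℕ} (h : ∀ x ∈ L, x < m) :
    peaks (m :: L) = peaks L := by
  simpa using peaks_split m [] L (by simp) h

lemma peaks_append_of_gt {m : ℕ} {L : List ℕ} (h : ∀ x ∈ L, x < m) :
    peaks (L ++ [m]) = peaks L := by
  simpa using peaks_split m L [] h (by simp)

/-- All rearrangements (as lists) of a finite set of naturals. -/
def arrangements (S : Finset ℕ) : Finset (List ℕ) :=
  (S.sort (· ≤ ·)).permutations.toFinset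

lemma mem_arrangements_iff {S : Finset ℕ} {L : List ℕ} :
    L ∈ arrangements S ↔ L.Nodup ∧ L.toFinset = S := by
  have hs : (S.sort (· ≤ ·)).Nodup := S.sort_nodup _
  constructor
  · intro h
    rw [arrangements, List.mem_toFinset, List.mem_permutations] at h
    refine ⟨h.nodup_iff.mpr hs, ?_⟩
    rw [List.toFinset_eq_of_perm _ _ h, Finset.sort_toFinset]
  · rintro ⟨h1, h2⟩
    rw [arrangements, List.mem_toFinset, List.mem_permutations]
    refine List.perm_of_nodup_nodup_toFinset_eq h1 hs ?_
    rw [h2, Finset.sort_toFinset]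

lemma arrangements_singleton (m : ℕ) : arrangements {m} = {[m]} := by
  ext L
  rw [mem_arrangements_iff]
  constructor
  · rintro ⟨h1, h2⟩
    cases L with
    | nil => exact absurd h2.symm (Finset.singleton_ne_empty m)
    | cons a t =>
      cases t with
      | nil =>
        simp only [List.toFinset_cons, List.toFinset_nil, insert_empty_eq] at h2
        simp [Finset.singleton_inj.mp h2]
      | cons b t' =>
        have ha : a ∈ ({m} : Finset ℕ) := by rw [← h2]; simp
        have hb : b ∈ ({m} : Finset ℕ) := by rw [← h2]; simp
        simp only [Finset.mem_singleton] at ha hb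
        simp [ha, hb] at h1
  · intro h
    simp only [Finset.mem_singleton] at h
    subst h
    simp

lemma exists_decomp {S : Finset ℕ} {m : ℕ} (hm : m ∈ S) (hmax : ∀ x ∈ S, x ≤ m)
    {L : List ℕ} (hL : L ∈ arrangements S) :
    ∃ LA LB, L = LA ++ m :: LB ∧ (∀ x ∈ LA, x < m) ∧ (∀ x ∈ LB, x < m) ∧
      LA.Nodup ∧ LB.Nodup ∧ LA.toFinset ∪ LB.toFinset = S.erase m ∧
      Disjoint LA.toFinset LB.toFinset := by
  rw [mem_arrangements_iff] at hL
  obtain ⟨hnd, hfin⟩ := hL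
  have hmem : m ∈ L := by rw [← List.mem_toFinset, hfin]; exact hm
  obtain ⟨LA, LB, rfl⟩ := List.append_of_mem hmem
  have hndA : LA.Nodup := (hnd.of_append_left)
  have hnd' := hnd
  rw [List.nodup_append] at hnd'
  obtain ⟨_, hndB', hdisj⟩ := hnd'
  have hmA : m ∉ LA := fun h => hdisj m h m (by simp) rfl
  have hmB : m ∉ LB := by
    have := List.Nodup.of_append_right hnd
    rw [List.nodup_cons] at this
    exact this.1
  have hsub : ∀ x, x ∈ LA ∨ x ∈ LB → x ∈ S ∧ x ≠ m := by
    intro x hx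
    constructor
    · rw [← hfin, List.mem_toFinset]
      rcases hx with h | h
      · exact List.mem_append_left _ h
      · exact List.mem_append_right _ (by simp [h])
    · rintro rfl
      rcases hx with h | h
      · exact hmA h
      · exact hmB h
  refine ⟨LA, LB, rfl, ?_, ?_, hndA, (List.Nodup.of_append_right hnd).of_cons, ?_, ?_⟩
  · intro x hx
    have := hsub x (Or.inl hx)
    exact lt_of_le_of_ne (hmax x this.1) this.2
  · intro x hx
    have := hsub x (Or.inr hx)
    exact lt_of_le_of_ne (hmax x this.1) this.2
  · ext x
    simp only [Finset.mem_union, List.mem_toFinset, Finset.mem_erase]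
    constructor
    · intro hx
      exact ⟨(hsub x hx).2, (hsub x hx).1⟩
    · rintro ⟨hne, hxS⟩
      have : x ∈ LA ++ m :: LB := by rw [← List.mem_toFinset, hfin]; exact hxS
      rcases List.mem_append.mp this with h | h
      · exact Or.inl h
      · rcases List.mem_cons.mp h with h | h
        · exact (hne h).elim
        · exact Or.inr h
  · rw [Finset.disjoint_left]
    intro x hx1 hx2
    rw [List.mem_toFinset] at hx1 hx2
    exact hdisj x hx1 x (by simp [hx2]) rfl

lemma card_step (S : Finset ℕ) (m : ℕ) (hm : m ∈ S) (hmax : ∀ x ∈ S, x ≤ m)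
    (hne : (S.erase m).Nonempty) (tgt : List ℕ) (hmt : m ∉ tgt) :
    ((arrangements S).filter (fun L => peaks L = tgt)).card =
      2 * ((arrangements (S.erase m)).filter (fun L => peaks L = tgt)).card := by
  set T := S.erase m with hT
  have key : ∀ x ∈ T, x < m := by
    intro x hx
    rw [hT, Finset.mem_erase] at hx
    exact lt_of_le_of_ne (hmax x hx.2) hx.1
  have hmain : (arrangements S).filter (fun L => peaks L = tgt) =
      ((arrangements T).filter (fun L => peaks L = tgt)).image (m :: ·) ∪
      ((arrangements T).filter (fun L => peaks L = tgt)).image (· ++ [m]) := by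
    ext L
    simp only [Finset.mem_union, Finset.mem_image, Finset.mem_filter]
    constructor
    · rintro ⟨hL, hpk⟩
      obtain ⟨LA, LB, rfl, hAlt, hBlt, hndA, hndB, hunion, hdisj⟩ :=
        exists_decomp hm hmax hL
      rcases eq_or_ne LA [] with rfl | hAne
      · refine Or.inl ⟨LB, ⟨?_, ?_⟩, rfl⟩
        · rw [mem_arrangements_iff]
          refine ⟨hndB, ?_⟩
          simpa using hunion
        · rw [← hpk, List.nil_append, peaks_cons_of_gt hBlt]
      · rcases eq_or_ne LB [] with rfl | hBne
        · refine Or.inr ⟨LA, ⟨?_, ?_⟩, rfl⟩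
          · rw [mem_arrangements_iff]
            refine ⟨hndA, ?_⟩
            simpa using hunion
          · rw [← hpk, peaks_append_of_gt hAlt]
        · exfalso
          apply hmt
          rw [← hpk, peaks_split m LA LB hAlt hBlt, if_neg (by simp [hAne, hBne])]
          simp
    · rintro (⟨LB, ⟨hLB, hpk⟩, rfl⟩ | ⟨LA, ⟨hLA, hpk⟩, rfl⟩)
      · rw [mem_arrangements_iff] at hLB ⊢
        obtain ⟨hnd, hfin⟩ := hLB
        have hlt : ∀ x ∈ LB, x < m := fun x hx => key x (by rw [← hfin]; simpa using hx)
        refine ⟨⟨?_, ?_⟩, ?_⟩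
        · exact List.nodup_cons.mpr ⟨fun h => lt_irrefl m (hlt m h), hnd⟩
        · rw [List.toFinset_cons, hfin, hT, Finset.insert_erase hm]
        · rw [peaks_cons_of_gt hlt, hpk]
      · rw [mem_arrangements_iff] at hLA ⊢
        obtain ⟨hnd, hfin⟩ := hLA
        have hlt : ∀ x ∈ LA, x < m := fun x hx => key x (by rw [← hfin]; simpa using hx)
        refine ⟨⟨?_, ?_⟩, ?_⟩
        · rw [List.nodup_append]
          exact ⟨hnd, List.nodup_singleton m, fun x hx y h hxy => by
            simp only [List.mem_singleton] at h
            rw [h] at hxy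
            exact absurd (hlt x hx) (by rw [hxy]; exact lt_irrefl m)⟩
        · simp only [List.toFinset_append, List.toFinset_cons, List.toFinset_nil,
            insert_empty_eq]
          rw [hfin]
          rw [Finset.union_comm]
          rw [show ({m} : Finset ℕ) ∪ T = insert m T from rfl, hT, Finset.insert_erase hm]
        · rw [peaks_append_of_gt hlt, hpk]
  rw [hmain, Finset.card_union_of_disjoint, Finset.card_image_of_injective _ List.cons_injective,
    Finset.card_image_of_injective _ (List.append_left_injective [m])]
  · ring
  · rw [Finset.disjoint_left]
    intro L hL1 hL2
    simp only [Finset.mem_image, Finset.mem_filter] at hL1 hL2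
    obtain ⟨LB, ⟨hLB, -⟩, rfl⟩ := hL1
    obtain ⟨LA, ⟨hLA, -⟩, hEq⟩ := hL2
    rw [mem_arrangements_iff] at hLA hLB
    cases LA with
    | nil =>
      simp only [List.nil_append] at hEq
      have : LB = [] := by
        have := hEq
        injection this with _ h2
        exact h2.symm
      rw [this] at hLB
      simp only [List.toFinset_nil] at hLB
      exact hne.ne_empty hLB.2.symm
    | cons x LA' =>
      rw [List.cons_append] at hEq
      injection hEq with h1 h2
      have hx : x ∈ T := by rw [← hLA.2]; simp
      exact absurd h1 (ne_of_lt (key x hx))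

lemma card_noPeak : ∀ (n : ℕ) (S : Finset ℕ), S.card = n → S.Nonempty →
    ((arrangements S).filter (fun L => peaks L = [])).card = 2 ^ (S.card - 1) := by
  intro n
  induction n using Nat.strong_induction_on with
  | _ n ih =>
    intro S hcard hne
    have hm := S.max'_mem hne
    set m := S.max' hne with hmdef
    have hmax : ∀ x ∈ S, x ≤ m := fun x hx => S.le_max' x hx
    rcases eq_or_lt_of_le (Finset.one_le_card.mpr hne) with h1 | h2
    · have : S = {m} := Finset.eq_singleton_iff_unique_mem.mpr ⟨hm, fun x hx => by
        have := Finset.card_eq_one.mp h1.symm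
        obtain ⟨a, rfl⟩ := this
        simp only [Finset.mem_singleton] at hx hm
        rw [hx, hm]⟩
      rw [this, arrangements_singleton]
      rw [Finset.filter_singleton]
      norm_num [peaks_single]
    · have hTne : (S.erase m).Nonempty := by
        rw [← Finset.card_pos, Finset.card_erase_of_mem hm]
        omega
      have hTcard : (S.erase m).card = n - 1 := by
        rw [Finset.card_erase_of_mem hm, hcard]
      rw [card_step S m hm hmax hTne [] (by simp),
        ih (n - 1) (by omega) _ hTcard hTne, hTcard, hcard]
      rw [← pow_succ']
      congr 1
      omega

lemma takeWhile_ne_append {m : ℕ} : ∀ (LA LB : List ℕ), m ∉ LA →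
    ((LA ++ m :: LB).takeWhile (fun x => x ≠ m)) = LA
  | [], LB, _ => by simp
  | a :: t, LB, h => by
    have ha : a ≠ m := fun hh => h (by simp [hh])
    have ht : m ∉ t := fun hh => h (by simp [hh])
    simp only [List.cons_append, List.takeWhile_cons]
    rw [if_pos (by simpa using ha)]
    rw [takeWhile_ne_append t LB ht]

lemma card_peak_max (S : Finset ℕ) (m : ℕ) (hm : m ∈ S) (hmax : ∀ x ∈ S, x ≤ m)
    (h3 : 3 ≤ S.card) :
    ((arrangements S).filter (fun L => peaks L = [m])).card =
      (2 ^ (S.card - 1) - 2) * 2 ^ (S.card - 3) := by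
  classical
  set T := S.erase m with hT
  have hmT : m ∉ T := Finset.notMem_erase m S
  have hTcard : T.card = S.card - 1 := Finset.card_erase_of_mem hm
  have hT2 : 2 ≤ T.card := by omega
  have hTlt : ∀ x ∈ T, x < m := by
    intro x hx
    rw [hT, Finset.mem_erase] at hx
    exact lt_of_le_of_ne (hmax x hx.2) hx.1
  set 𝒜 := T.powerset.filter (fun A => A ≠ ∅ ∧ A ≠ T) with h𝒜
  set F : Finset ℕ → Finset (List ℕ) := fun A =>
    (((arrangements A).filter (fun L => peaks L = [])) ×ˢ
     ((arrangements (T \ A)).filter (fun L => peaks L = []))).image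
      (fun p => p.1 ++ m :: p.2) with hF
  -- basic facts about members of F A
  have hFmem : ∀ A ∈ 𝒜, ∀ L ∈ F A,
      ∃ LA LB, L = LA ++ m :: LB ∧ m ∉ LA ∧ LA.toFinset = A := by
    intro A hA L hL
    rw [hF] at hL
    simp only [Finset.mem_image, Finset.mem_product, Finset.mem_filter] at hL
    obtain ⟨⟨LA, LB⟩, ⟨⟨hLA, -⟩, -⟩, rfl⟩ := hL
    rw [mem_arrangements_iff] at hLA
    rw [h𝒜, Finset.mem_filter, Finset.mem_powerset] at hA
    refine ⟨LA, LB, rfl, ?_, hLA.2⟩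
    intro hcon
    exact hmT (hA.1 (hLA.2 ▸ List.mem_toFinset.mpr hcon))
  have hmain : (arrangements S).filter (fun L => peaks L = [m]) = 𝒜.biUnion F := by
    ext L
    simp only [Finset.mem_filter, Finset.mem_biUnion]
    constructor
    · rintro ⟨hL, hpk⟩
      obtain ⟨LA, LB, rfl, hAlt, hBlt, hndA, hndB, hunion, hdisj⟩ :=
        exists_decomp hm hmax hL
      rw [← hT] at hunion
      rw [peaks_split m LA LB hAlt hBlt] at hpk
      have hAne : LA ≠ [] ∧ LB ≠ [] := by
        by_contra hcon
        rw [not_and_or, not_ne_iff, not_ne_iff] at hcon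
        rw [if_pos (by tauto), List.append_nil] at hpk
        have : m ∈ peaks LA ++ peaks LB := by rw [hpk]; simp
        rcases List.mem_append.mp this with h | h
        · exact lt_irrefl m (hAlt m ((peaks_sublist LA).subset h))
        · exact lt_irrefl m (hBlt m ((peaks_sublist LB).subset h))
      rw [if_neg (by simp [hAne.1, hAne.2])] at hpk
      have hlen := congrArg List.length hpk
      simp only [List.length_append, List.length_cons, List.length_singleton] at hlen
      have hpA : peaks LA = [] := List.length_eq_zero_iff.mp (by omega)
      have hpB : peaks LB = [] := List.length_eq_zero_iff.mp (by omega)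
      refine ⟨LA.toFinset, ?_, ?_⟩
      · rw [h𝒜, Finset.mem_filter, Finset.mem_powerset]
        refine ⟨hunion ▸ Finset.subset_union_left, ?_, ?_⟩
        · simpa using hAne.1
        · intro hcon
          obtain ⟨x, hx⟩ := List.exists_mem_of_ne_nil LB hAne.2
          have hxT : x ∈ T := hunion ▸ Finset.mem_union_right _ (List.mem_toFinset.mpr hx)
          rw [← hcon] at hxT
          exact Finset.disjoint_left.mp hdisj hxT (List.mem_toFinset.mpr hx)
      · rw [hF]
        simp only [Finset.mem_image, Finset.mem_product, Finset.mem_filter]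
        refine ⟨⟨LA, LB⟩, ⟨⟨?_, hpA⟩, ⟨?_, hpB⟩⟩, rfl⟩
        · exact mem_arrangements_iff.mpr ⟨hndA, rfl⟩
        · refine mem_arrangements_iff.mpr ⟨hndB, ?_⟩
          rw [← hunion, Finset.union_sdiff_cancel_left hdisj]
    · rintro ⟨A, hA, hL⟩
      rw [h𝒜, Finset.mem_filter, Finset.mem_powerset] at hA
      obtain ⟨hAsub, hAne, hAneT⟩ := hA
      rw [hF] at hL
      simp only [Finset.mem_image, Finset.mem_product, Finset.mem_filter] at hL
      obtain ⟨⟨LA, LB⟩, ⟨⟨hLA, hpA⟩, ⟨hLB, hpB⟩⟩, rfl⟩ := hL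
      rw [mem_arrangements_iff] at hLA hLB
      have hAlt : ∀ x ∈ LA, x < m := fun x hx =>
        hTlt x (hAsub (hLA.2 ▸ List.mem_toFinset.mpr hx))
      have hBlt : ∀ x ∈ LB, x < m := fun x hx => by
        have : x ∈ T \ A := hLB.2 ▸ List.mem_toFinset.mpr hx
        exact hTlt x (Finset.mem_sdiff.mp this).1
      have hLAne : LA ≠ [] := by
        intro hcon
        rw [hcon] at hLA
        simp only [List.toFinset_nil] at hLA
        exact hAne hLA.2.symm
      have hLBne : LB ≠ [] := by
        intro hcon
        rw [hcon] at hLB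
        simp only [List.toFinset_nil] at hLB
        have : (T \ A).Nonempty := Finset.sdiff_nonempty.mpr (fun h =>
          hAneT (Finset.Subset.antisymm hAsub h))
        rw [← hLB.2] at this
        exact Finset.not_nonempty_empty this
      constructor
      · rw [mem_arrangements_iff]
        constructor
        · rw [List.nodup_append]
          refine ⟨hLA.1, ?_, ?_⟩
          · rw [List.nodup_cons]
            exact ⟨fun h => lt_irrefl m (hBlt m h), hLB.1⟩
          · intro x hx y hx2 hxy
            subst hxy
            rcases List.mem_cons.mp hx2 with rfl | h
            · exact lt_irrefl x (hAlt x hx)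
            · have h1 : x ∈ A := hLA.2 ▸ List.mem_toFinset.mpr hx
              have h2 : x ∈ T \ A := hLB.2 ▸ List.mem_toFinset.mpr h
              exact (Finset.mem_sdiff.mp h2).2 h1
        · rw [List.toFinset_append, List.toFinset_cons, hLA.2, hLB.2,
            Finset.union_insert, Finset.union_sdiff_of_subset hAsub, hT,
            Finset.insert_erase hm]
      · rw [peaks_split m LA LB hAlt hBlt, if_neg (by simp [hLAne, hLBne]), hpA, hpB]
        simp
  have hdisjF : ∀ A ∈ 𝒜, ∀ B ∈ 𝒜, A ≠ B → Disjoint (F A) (F B) := by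
    intro A hA B hB hAB
    rw [Finset.disjoint_left]
    intro L h1 h2
    obtain ⟨LA, LB, hEq1, hm1, hA1⟩ := hFmem A hA L h1
    obtain ⟨LA', LB', hEq2, hm2, hA2⟩ := hFmem B hB L h2
    apply hAB
    rw [← hA1, ← hA2]
    have hstep : LA = LA' := by
      have t1 := takeWhile_ne_append LA LB hm1
      have t2 := takeWhile_ne_append LA' LB' hm2
      rw [← hEq1] at t1
      rw [← hEq2] at t2
      rw [← t1, ← t2]
    rw [hstep]
  rw [hmain, Finset.card_biUnion hdisjF]
  have hterm : ∀ A ∈ 𝒜, (F A).card = 2 ^ (T.card - 2) := by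
    intro A hA
    rw [h𝒜, Finset.mem_filter, Finset.mem_powerset] at hA
    obtain ⟨hsub, hne, hneT⟩ := hA
    have hAne : A.Nonempty := Finset.nonempty_iff_ne_empty.mpr hne
    have hBne : (T \ A).Nonempty := Finset.sdiff_nonempty.mpr (fun h =>
      hneT (Finset.Subset.antisymm hsub h))
    have hAcard : 1 ≤ A.card := Finset.one_le_card.mpr hAne
    have hAle : A.card ≤ T.card - 1 := by
      have h1 : A.card ≤ T.card := Finset.card_le_card hsub
      have h2 : A.card ≠ T.card := fun hc =>
        hneT (Finset.eq_of_subset_of_card_le hsub (le_of_eq hc.symm))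
      omega
    have hsd : (T \ A).card = T.card - A.card := Finset.card_sdiff_of_subset hsub
    have hmA : ∀ (LA : List ℕ), LA.toFinset = A → m ∉ LA := by
      intro LA hLA hcon
      exact hmT (hsub (hLA ▸ List.mem_toFinset.mpr hcon))
    rw [hF]
    have hinj : Set.InjOn (fun p : List ℕ × List ℕ => p.1 ++ m :: p.2)
        ((((arrangements A).filter (fun L => peaks L = [])) ×ˢ
          ((arrangements (T \ A)).filter (fun L => peaks L = []))) : Finset (List ℕ × List ℕ)) := by
      intro p hp q hq hEq
      simp only [Finset.mem_coe, Finset.mem_product, Finset.mem_filter] at hp hq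
      obtain ⟨⟨hp1, -⟩, -⟩ := hp
      obtain ⟨⟨hq1, -⟩, -⟩ := hq
      rw [mem_arrangements_iff] at hp1 hq1
      have hmp := hmA p.1 hp1.2
      have hmq := hmA q.1 hq1.2
      have t1 := takeWhile_ne_append p.1 p.2 hmp
      have t2 := takeWhile_ne_append q.1 q.2 hmq
      simp only at hEq
      have h1 : p.1 = q.1 := by rw [← t1, ← t2, hEq]
      have h2 : p.2 = q.2 := by
        rw [h1] at hEq
        exact List.tail_eq_of_cons_eq (List.append_cancel_left hEq)
      exact Prod.ext h1 h2
    rw [Finset.card_image_of_injOn hinj, Finset.card_product,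
      card_noPeak A.card A rfl hAne, card_noPeak (T \ A).card _ rfl hBne, hsd, ← pow_add]
    congr 1
    omega
  rw [Finset.sum_congr rfl hterm, Finset.sum_const, smul_eq_mul]
  have hTne : T ≠ ∅ := by
    intro h
    rw [h] at hT2
    simp at hT2
  have hcard𝒜 : 𝒜.card = 2 ^ T.card - 2 := by
    have heq : 𝒜 = T.powerset \ {∅, T} := by
      ext A
      rw [h𝒜, Finset.mem_filter, Finset.mem_sdiff, Finset.mem_insert, Finset.mem_singleton]
      tauto
    have hsubp : ({∅, T} : Finset (Finset ℕ)) ⊆ T.powerset := by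
      intro x hx
      rw [Finset.mem_insert, Finset.mem_singleton] at hx
      rcases hx with rfl | rfl
      · exact Finset.empty_mem_powerset T
      · exact Finset.mem_powerset_self T
    rw [heq, Finset.card_sdiff_of_subset hsubp, Finset.card_powerset,
      Finset.card_insert_of_notMem (by simpa using (Ne.symm hTne)), Finset.card_singleton]
  rw [hcard𝒜, hTcard]
  have h1 : S.card - 1 - 2 = S.card - 3 := by omega
  rw [h1]

lemma card_peak_single : ∀ (k : ℕ) (S : Finset ℕ) (l : ℕ), l ∈ S →
    (S.filter (fun x => l < x)).card = k → 3 ≤ (S.filter (fun x => x ≤ l)).card →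
    ((arrangements S).filter (fun L => peaks L = [l])).card =
      2 ^ (S.card - 2) * (2 ^ ((S.filter (fun x => x ≤ l)).card - 2) - 1) := by
  intro k
  induction k with
  | zero =>
    intro S l hl hk hb
    have hmax : ∀ x ∈ S, x ≤ l := by
      intro x hx
      by_contra hcon
      have : x ∈ S.filter (fun x => l < x) := Finset.mem_filter.mpr ⟨hx, by omega⟩
      rw [Finset.card_eq_zero.mp hk] at this
      exact Finset.notMem_empty x this
    have hfull : S.filter (fun x => x ≤ l) = S := by
      ext x
      simp only [Finset.mem_filter, and_iff_left_iff_imp]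
      exact fun hx => hmax x hx
    rw [hfull] at hb ⊢
    rw [card_peak_max S l hl hmax hb]
    have hx : 2 ^ (S.card - 1) = 2 * 2 ^ (S.card - 2) := by
      rw [← pow_succ']; congr 1; omega
    have hy : 2 ^ (S.card - 2) = 2 * 2 ^ (S.card - 3) := by
      rw [← pow_succ']; congr 1; omega
    rw [hx, hy]
    set y := 2 ^ (S.card - 3)
    rw [Nat.sub_mul, Nat.mul_sub]
    ring_nf
  | succ k ih =>
    intro S l hl hk hb
    have hSne : S.Nonempty := ⟨l, hl⟩
    set m := S.max' hSne with hmdef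
    have hmS : m ∈ S := S.max'_mem hSne
    have hmax : ∀ x ∈ S, x ≤ m := fun x hx => S.le_max' x hx
    have hml : l < m := by
      have : (S.filter (fun x => l < x)).Nonempty := by
        rw [← Finset.card_pos, hk]; omega
      obtain ⟨x, hx⟩ := this
      rw [Finset.mem_filter] at hx
      exact lt_of_lt_of_le hx.2 (hmax x hx.1)
    have hlm : l ≠ m := ne_of_lt hml
    have hlE : l ∈ S.erase m := Finset.mem_erase.mpr ⟨hlm, hl⟩
    have hEne : (S.erase m).Nonempty := ⟨l, hlE⟩
    have hfilter1 : (S.erase m).filter (fun x => l < x) = (S.filter (fun x => l < x)).erase m := by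
      ext x
      simp only [Finset.mem_filter, Finset.mem_erase]
      tauto
    have hkE : ((S.erase m).filter (fun x => l < x)).card = k := by
      rw [hfilter1, Finset.card_erase_of_mem (Finset.mem_filter.mpr ⟨hmS, hml⟩), hk]
      omega
    have hfilter2 : (S.erase m).filter (fun x => x ≤ l) = S.filter (fun x => x ≤ l) := by
      ext x
      simp only [Finset.mem_filter, Finset.mem_erase]
      constructor
      · tauto
      · rintro ⟨hx, hxl⟩
        exact ⟨⟨by omega, hx⟩, hxl⟩
    have hbE : 3 ≤ ((S.erase m).filter (fun x => x ≤ l)).card := by rw [hfilter2]; exact hb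
    have hcardE : (S.erase m).card = S.card - 1 := Finset.card_erase_of_mem hmS
    have hcard4 : 4 ≤ S.card := by
      have h1 : ((S.erase m).filter (fun x => x ≤ l)).card ≤ (S.erase m).card :=
        Finset.card_le_card (Finset.filter_subset _ _)
      have h2 : 1 ≤ S.card := Finset.one_le_card.mpr hSne
      omega
    rw [card_step S m hmS hmax hEne [l] (by simp [Ne.symm hlm]),
      ih (S.erase m) l hlE hkE hbE, hfilter2, hcardE]
    rw [← mul_assoc]
    congr 1
    rw [← pow_succ']
    congr 1
    omega

lemma mem_peaks_iff : ∀ (L : List ℕ) (x : ℕ),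
    x ∈ peaks L ↔ ∃ i, i + 2 < L.length ∧ L.getD (i+1) 0 = x ∧
      L.getD i 0 < x ∧ L.getD (i+2) 0 < x
  | [], x => by
    simp only [peaks_nil, List.not_mem_nil, List.length_nil, false_iff]
    rintro ⟨i, h, -⟩
    omega
  | [a], x => by
    simp only [peaks_single, List.not_mem_nil, List.length_singleton, false_iff]
    rintro ⟨i, h, -⟩
    omega
  | [a, b], x => by
    simp only [peaks_pair, List.not_mem_nil, false_iff]
    rintro ⟨i, h, -⟩
    simp only [List.length_cons, List.length_nil] at h
    omega
  | a :: b :: c :: t, x => by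
    rw [peaks_cons_cons_cons]
    have ih := mem_peaks_iff (b :: c :: t) x
    constructor
    · intro h
      rcases List.mem_append.mp h with h | h
      · by_cases hc : a < b ∧ c < b
        · rw [if_pos hc] at h
          simp only [List.mem_singleton] at h
          subst h
          exact ⟨0, by simp only [List.length_cons]; omega, by simp [List.getD],
            by simpa [List.getD] using hc.1, by simpa [List.getD] using hc.2⟩
        · rw [if_neg hc] at h
          exact absurd h (List.not_mem_nil (a := x))
      · obtain ⟨i, h1, h2, h3, h4⟩ := ih.mp h
        refine ⟨i + 1, ?_, ?_, ?_, ?_⟩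
        · simp only [List.length_cons] at h1 ⊢
          omega
        · simpa [List.getD_cons_succ] using h2
        · simpa [List.getD_cons_succ] using h3
        · simpa [List.getD_cons_succ] using h4
    · rintro ⟨i, h1, h2, h3, h4⟩
      cases i with
      | zero =>
        simp only [List.getD_cons_succ, List.getD_cons_zero] at h2 h3 h4
        subst h2
        exact List.mem_append.mpr (Or.inl (by rw [if_pos ⟨h3, h4⟩]; simp))
      | succ j =>
        refine List.mem_append.mpr (Or.inr (ih.mpr ⟨j, ?_, ?_, ?_, ?_⟩))
        · simp only [List.length_cons] at h1 ⊢
          omega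
        · simpa [List.getD_cons_succ] using h2
        · simpa [List.getD_cons_succ] using h3
        · simpa [List.getD_cons_succ] using h4

def permList (n : ℕ) (π : Equiv.Perm (Fin n)) : List ℕ :=
  (List.finRange n).map (fun i => (π i).val + 1)

lemma permList_length (n : ℕ) (π : Equiv.Perm (Fin n)) : (permList n π).length = n := by
  simp [permList]

lemma permList_getD (n : ℕ) (π : Equiv.Perm (Fin n)) {i : ℕ} (hi : i < n) :
    (permList n π).getD i 0 = (π ⟨i, hi⟩).val + 1 := by
  rw [List.getD_eq_getElem _ _ (by rw [permList_length]; exact hi)]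
  simp [permList]

lemma permList_nodup (n : ℕ) (π : Equiv.Perm (Fin n)) : (permList n π).Nodup := by
  refine List.Nodup.map ?_ (List.nodup_finRange n)
  intro a b hab
  simp only [add_left_inj] at hab
  exact π.injective (Fin.val_injective hab)

lemma permList_toFinset (n : ℕ) (π : Equiv.Perm (Fin n)) :
    (permList n π).toFinset = Finset.Icc 1 n := by
  ext x
  simp only [List.mem_toFinset, permList, List.mem_map, List.mem_finRange, Finset.mem_Icc]
  constructor
  · rintro ⟨i, -, rfl⟩
    have := (π i).isLt
    omega
  · rintro ⟨h1, h2⟩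
    refine ⟨π.symm ⟨x - 1, by omega⟩, by simp, ?_⟩
    rw [Equiv.apply_symm_apply]
    show x - 1 + 1 = x
    omega

lemma pinSet_eq (n : ℕ) (π : Equiv.Perm (Fin n)) :
    pinSet n π = (peaks (permList n π)).toFinset := by
  ext v
  rw [List.mem_toFinset, mem_peaks_iff, pinSet]
  simp only [Finset.mem_image, Finset.mem_filter, Finset.mem_univ, true_and]
  constructor
  · rintro ⟨i, ⟨h0, hn, hprev, hnext⟩, rfl⟩
    have hi : i.val - 1 + 1 = i.val := by omega
    refine ⟨i.val - 1, by rw [permList_length]; omega, ?_, ?_, ?_⟩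
    · rw [permList_getD n π (by omega : i.val - 1 + 1 < n)]
      have harg : (⟨i.val - 1 + 1, by omega⟩ : Fin n) = i :=
        Fin.ext (show i.val - 1 + 1 = i.val by omega)
      rw [harg]
    · rw [permList_getD n π (by omega : i.val - 1 < n)]
      have := hprev ⟨i.val - 1, by omega⟩ (by simp [hi])
      rw [Fin.lt_def] at this
      omega
    · rw [permList_getD n π (by omega : i.val - 1 + 2 < n)]
      have := hnext ⟨i.val + 1, by omega⟩ (by simp)
      rw [Fin.lt_def] at this
      have harg : (⟨i.val - 1 + 2, by omega⟩ : Fin n) = ⟨i.val + 1, by omega⟩ :=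
        Fin.ext (show i.val - 1 + 2 = i.val + 1 by omega)
      rw [harg]
      omega
  · rintro ⟨k, hk, h2, h3, h4⟩
    rw [permList_length] at hk
    rw [permList_getD n π (by omega : k + 1 < n)] at h2
    rw [permList_getD n π (by omega : k < n)] at h3
    rw [permList_getD n π hk] at h4
    refine ⟨⟨k + 1, by omega⟩, ⟨by simp, by simp; omega, ?_, ?_⟩, h2⟩
    · intro j hj
      have hjv : j.val + 1 = k + 1 := hj
      have hje : j = ⟨k, by omega⟩ := Fin.ext (show j.val = k by omega)
      rw [hje, Fin.lt_def]
      omega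
    · intro j hj
      have hjv : j.val = k + 1 + 1 := hj
      have hje : j = ⟨k + 2, by omega⟩ := Fin.ext (show j.val = k + 2 by omega)
      rw [hje, Fin.lt_def]
      omega

lemma pinSet_singleton_iff (n l : ℕ) (π : Equiv.Perm (Fin n)) :
    pinSet n π = {l} ↔ peaks (permList n π) = [l] := by
  rw [pinSet_eq]
  constructor
  · intro h
    have hnd : (peaks (permList n π)).Nodup := (peaks_sublist _).nodup (permList_nodup n π)
    cases hpk : peaks (permList n π) with
    | nil =>
      rw [hpk] at h
      simp only [List.toFinset_nil] at h
      exact absurd h.symm (Finset.singleton_ne_empty l)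
    | cons a t =>
      have ha : a = l := by
        have : a ∈ ({l} : Finset ℕ) := h ▸ (by rw [hpk]; simp)
        simpa using this
      cases t with
      | nil => rw [ha]
      | cons b t' =>
        have hb : b = l := by
          have : b ∈ ({l} : Finset ℕ) := h ▸ (by rw [hpk]; simp)
          simpa using this
        rw [hpk, ha, hb] at hnd
        simp at hnd
  · intro h
    rw [h]
    simp

/-- For `3 ≤ l ≤ n`, the number of permutations of `[n]` with pinnacle set `{l}` is
`2^{n−2}·(2^{l−2} − 1)`. -/
theorem stmt16 (n l : ℕ) (hl : 3 ≤ l) (hln : l ≤ n) :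
    Nat.card {π : Equiv.Perm (Fin n) // pinSet n π = {l}} =
      2 ^ (n - 2) * (2 ^ (l - 2) - 1) := by
  classical
  set tgt := (arrangements (Finset.Icc 1 n)).filter (fun L => peaks L = [l]) with htgt
  have hIcard : (Finset.Icc 1 n).card = n := by rw [Nat.card_Icc]; omega
  have hf : ∀ π : {π : Equiv.Perm (Fin n) // pinSet n π = {l}}, permList n π.1 ∈ tgt := by
    rintro ⟨π, hπ⟩
    rw [htgt, Finset.mem_filter, mem_arrangements_iff]
    exact ⟨⟨permList_nodup n π, permList_toFinset n π⟩, (pinSet_singleton_iff n l π).mp hπ⟩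
  have hbij : Function.Bijective
      (fun π : {π : Equiv.Perm (Fin n) // pinSet n π = {l}} =>
        (⟨permList n π.1, hf π⟩ : {L // L ∈ tgt})) := by
    constructor
    · rintro ⟨π, hπ⟩ ⟨σ, hσ⟩ h
      simp only [Subtype.mk.injEq] at h ⊢
      apply Equiv.ext
      intro i
      have h2 : (permList n π).getD i.val 0 = (permList n σ).getD i.val 0 := by rw [h]
      rw [permList_getD n π i.isLt, permList_getD n σ i.isLt] at h2
      replace this := h2
      simp only [add_left_inj] at this
      have : π ⟨i.val, i.isLt⟩ = σ ⟨i.val, i.isLt⟩ := Fin.val_injective this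
      simpa using this
    · rintro ⟨L, hL⟩
      rw [htgt, Finset.mem_filter, mem_arrangements_iff] at hL
      obtain ⟨⟨hnd, hfin⟩, hpk⟩ := hL
      have hlen : L.length = n := by
        rw [← List.toFinset_card_of_nodup hnd, hfin, hIcard]
      have hmem : ∀ i : Fin n, 1 ≤ L.getD i.val 0 ∧ L.getD i.val 0 ≤ n := by
        intro i
        have h1 : L.getD i.val 0 ∈ L := by
          rw [List.getD_eq_getElem _ _ (by omega : i.val < L.length)]
          exact List.getElem_mem _
        have := hfin ▸ List.mem_toFinset.mpr h1
        simpa [Finset.mem_Icc] using this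
      set g : Fin n → Fin n := fun i => ⟨L.getD i.val 0 - 1, by have := hmem i; omega⟩ with hg
      have hginj : Function.Injective g := by
        intro i j hij
        rw [hg] at hij
        simp only [Fin.mk.injEq] at hij
        have hi := hmem i
        have hj := hmem j
        have heq : L.getD i.val 0 = L.getD j.val 0 := by omega
        rw [List.getD_eq_getElem _ _ (by omega : i.val < L.length),
          List.getD_eq_getElem _ _ (by omega : j.val < L.length)] at heq
        have := (List.Nodup.getElem_inj_iff hnd).mp heq
        exact Fin.ext this
      set π : Equiv.Perm (Fin n) := Equiv.ofBijective g
        ((Finite.injective_iff_bijective).mp hginj) with hπ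
      have hπapp : ∀ i : Fin n, π i = g i := fun i => rfl
      have hplist : permList n π = L := by
        refine List.ext_getElem (by rw [permList_length, hlen]) ?_
        intro i h1 h2
        rw [permList_length] at h1
        rw [← List.getD_eq_getElem (permList n π) 0 (by rw [permList_length]; exact h1),
          permList_getD n π h1]
        rw [hπapp ⟨i, h1⟩]
        have hb : 1 ≤ L.getD i 0 := (hmem ⟨i, h1⟩).1
        rw [← List.getD_eq_getElem L 0 h2]
        show L.getD i 0 - 1 + 1 = L.getD i 0
        omega
      refine ⟨⟨π, ?_⟩, ?_⟩
      · rw [pinSet_singleton_iff n l π, hplist, hpk]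
      · simp only [Subtype.mk.injEq]
        exact hplist
  rw [Nat.card_congr (Equiv.ofBijective _ hbij), Nat.card_eq_finsetCard]
  have hfb : (Finset.Icc 1 n).filter (fun x => x ≤ l) = Finset.Icc 1 l := by
    ext x
    simp only [Finset.mem_filter, Finset.mem_Icc]
    omega
  have := card_peak_single ((Finset.Icc 1 n).filter (fun x => l < x)).card
    (Finset.Icc 1 n) l (by simp [Finset.mem_Icc]; omega) rfl
    (by rw [hfb, Nat.card_Icc]; omega)
  rw [htgt, this, hfb, Nat.card_Icc, Nat.card_Icc]
  have e1 : n + 1 - 1 - 2 = n - 2 := by omega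
  have e2 : l + 1 - 1 - 2 = l - 2 := by omega
  rw [e1, e2]
end

section
/- The number of admissible pinnacle sets contained in [n] with exactly d elements and maximum equal to 2d+1 is the Catalan number C_d (for n ≥ 2d+1). -/
open DyckStep

namespace Stmt18Aux

/-- The `k`-th smallest element of `S` is `≤ m` iff `S` has at least `k+1` elements `≤ m`. -/
lemma sort_get_le_iff (S : Finset ℕ) (k : ℕ) (h : k < (S.sort (· ≤ ·)).length) (m : ℕ) :
    (S.sort (· ≤ ·)).get ⟨k, h⟩ ≤ m ↔ k + 1 ≤ (S.filter (· ≤ m)).card := by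
  have hnd : (S.sort (· ≤ ·)).Nodup := S.sort_nodup _
  have hsorted : (S.sort (· ≤ ·)).Pairwise (· ≤ ·) := S.pairwise_sort _
  constructor
  · intro hle
    have hsub : ((S.sort (· ≤ ·)).take (k + 1)).toFinset ⊆ S.filter (· ≤ m) := by
      intro x hx
      rw [List.mem_toFinset] at hx
      obtain ⟨j, hj, hget⟩ := List.mem_take_iff_getElem.mp hx
      have hjk : j ≤ k := by omega
      have hxle : x ≤ (S.sort (· ≤ ·)).get ⟨k, h⟩ := by
        rw [← hget]
        exact hsorted.rel_get_of_le (by simpa using hjk)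
      have hxS : x ∈ S := by
        rw [← Finset.mem_sort (· ≤ ·)]
        rw [← hget]; exact List.getElem_mem _
      simp only [Finset.mem_filter]
      exact ⟨hxS, le_trans hxle hle⟩
    calc k + 1 = ((S.sort (· ≤ ·)).take (k + 1)).toFinset.card := by
              rw [List.toFinset_card_of_nodup (hnd.sublist (List.take_sublist _ _))]
              rw [List.length_take]
              have h' : k < S.card := by rwa [Finset.length_sort] at h
              rw [Finset.length_sort]
              omega
      _ ≤ (S.filter (· ≤ m)).card := Finset.card_le_card hsub
  · intro hcard
    by_contra hgt
    push_neg at hgt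
    have hsub : S.filter (· ≤ m) ⊆ ((S.sort (· ≤ ·)).take k).toFinset := by
      intro x hx
      simp only [Finset.mem_filter] at hx
      obtain ⟨hxS, hxm⟩ := hx
      have hxl : x ∈ S.sort (· ≤ ·) := by rw [Finset.mem_sort]; exact hxS
      obtain ⟨j, hget⟩ := List.get_of_mem hxl
      have hjk : (j : ℕ) < k := by
        by_contra hge
        push_neg at hge
        have h1 : (S.sort (· ≤ ·)).get ⟨k, h⟩ ≤ (S.sort (· ≤ ·)).get j :=
          hsorted.rel_get_of_le (by exact hge)
        rw [hget] at h1
        omega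
      rw [List.mem_toFinset]
      rw [← hget]
      rw [List.get_eq_getElem]
      exact List.mem_take_iff_getElem.mpr ⟨j, by omega, by simp⟩
    have := Finset.card_le_card hsub
    have h2 : (((S.sort (· ≤ ·))).take k).toFinset.card ≤ k := by
      refine le_trans (List.toFinset_card_le _) ?_
      simp [List.length_take]
    omega

lemma admissible_iff (S : Finset ℕ) :
    Admissible S ↔ ∀ k, (S.filter (· ≤ 2 * (k + 1))).card ≤ k := by
  constructor
  · intro hA k
    by_contra hc
    push_neg at hc
    have hk : k < (S.sort (· ≤ ·)).length := by
      have : (S.filter (· ≤ 2 * (k + 1))).card ≤ S.card := Finset.card_le_card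
        (Finset.filter_subset _ _)
      rw [Finset.length_sort]; omega
    have := (sort_get_le_iff S k hk (2 * (k + 1))).mpr (by omega)
    have := hA k hk
    omega
  · intro hF i h
    by_contra hc
    push_neg at hc
    have := (sort_get_le_iff S i h (2 * (i + 1))).mp hc
    have := hF i
    omega

/-- All elements of an admissible set are at least 3. -/
lemma three_le_of_admissible {S : Finset ℕ} (hA : Admissible S) {s : ℕ} (hs : s ∈ S) :
    3 ≤ s := by
  have hsl : s ∈ S.sort (· ≤ ·) := by rw [Finset.mem_sort]; exact hs
  obtain ⟨j, hget⟩ := List.get_of_mem hsl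
  have h1 := hA j j.isLt
  simp only [Fin.eta] at h1
  rw [hget] at h1
  omega

/-- Counting `D`s among the first `i` entries via a `Finset.range` filter. -/
lemma card_filter_range_eq_count (l : List DyckStep) :
    ∀ i, i ≤ l.length →
    ((Finset.range i).filter (fun j => l.getD j U = D)).card = (l.take i).count D := by
  intro i
  induction i with
  | zero => simp
  | succ i ih =>
    intro hi
    rw [Finset.range_add_one, Finset.filter_insert]
    have hil : i < l.length := by omega
    have htake : l.take (i + 1) = l.take i ++ [l[i]] := by
      rw [List.take_succ]
      simp [List.getElem?_eq_getElem hil]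
    have hgd : l.getD i U = l[i] := List.getD_eq_getElem l U hil
    rw [htake, List.count_append]
    by_cases hD : l[i] = D
    · rw [if_pos (by rw [hgd, hD]), Finset.card_insert_of_notMem (by simp)]
      rw [ih (by omega)]
      simp [hD]
    · rw [if_neg (by rw [hgd]; exact hD), ih (by omega)]
      have hU : l[i] = U := (DyckStep.dichotomy _).resolve_right hD
      rw [hU]
      simp

lemma count_U_add_count_D (l : List DyckStep) : l.count U + l.count D = l.length := by
  induction l with
  | nil => simp
  | cons a t ih =>
    cases a <;> simp [List.count_cons] <;> omega

/-- The map from sets to lists of Dyck steps. -/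
def word (d : ℕ) (S : Finset ℕ) : List DyckStep :=
  (List.range (2 * d)).map (fun j => if j + 2 ∈ S then D else U)

lemma word_length (d : ℕ) (S : Finset ℕ) : (word d S).length = 2 * d := by
  simp [word]

/-- Key counting identity, given all elements of `S` are `≥ 2`. -/
lemma card_range_filter_mem (S : Finset ℕ) (h2 : ∀ s ∈ S, 2 ≤ s) (m : ℕ) :
    ((Finset.range m).filter (fun j => j + 2 ∈ S)).card = (S.filter (· ≤ m + 1)).card := by
  apply Finset.card_bij (fun j _ => j + 2)
  · intro j hj
    simp only [Finset.mem_filter, Finset.mem_range] at hj ⊢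
    exact ⟨hj.2, by omega⟩
  · intro a ha b hb hab; omega
  · intro s hs
    simp only [Finset.mem_filter, Finset.mem_range] at hs
    have h2s := h2 s hs.1
    have heq : s - 2 + 2 = s := by omega
    refine ⟨s - 2, ?_, heq⟩
    simp only [Finset.mem_filter, Finset.mem_range]
    rw [heq]
    exact ⟨by omega, hs.1⟩

lemma word_take_count (d : ℕ) (S : Finset ℕ) (h2 : ∀ s ∈ S, 2 ≤ s) (i : ℕ)
    (hi : i ≤ 2 * d) :
    ((word d S).take i).count D = (S.filter (· ≤ i + 1)).card := by
  rw [← card_filter_range_eq_count (word d S) i (by rw [word_length]; exact hi)]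
  rw [← card_range_filter_mem S h2 i]
  congr 1
  apply Finset.filter_congr
  intro j hj
  rw [Finset.mem_range] at hj
  have hjl : j < (word d S).length := by rw [word_length]; omega
  rw [List.getD_eq_getElem _ _ hjl]
  have : (word d S)[j] = if j + 2 ∈ S then D else U := by
    simp [word]
  rw [this]
  by_cases hmem : j + 2 ∈ S <;> simp [hmem]

lemma word_count_D (d : ℕ) (S : Finset ℕ) (h2 : ∀ s ∈ S, 2 ≤ s)
    (hub : ∀ s ∈ S, s ≤ 2 * d + 1) : (word d S).count D = S.card := by
  have h := word_take_count d S h2 (2 * d) le_rfl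
  rw [List.take_of_length_le (by rw [word_length])] at h
  rw [h]
  congr 1
  apply Finset.filter_true_of_mem
  intro s hs
  exact hub s hs

/-- The word of an admissible set is a Dyck word. -/
def wordD (d : ℕ) (S : Finset ℕ) (hA : Admissible S) (hcard : S.card = d)
    (hub : ∀ s ∈ S, s ≤ 2 * d + 1) : DyckWord where
  toList := word d S
  count_U_eq_count_D := by
    have h2 : ∀ s ∈ S, 2 ≤ s := fun s hs => by have := three_le_of_admissible hA hs; omega
    have hD := word_count_D d S h2 hub
    have hsum := count_U_add_count_D (word d S)
    rw [word_length] at hsum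
    omega
  count_D_le_count_U i := by
    have h2 : ∀ s ∈ S, 2 ≤ s := fun s hs => by have := three_le_of_admissible hA hs; omega
    have hF := (admissible_iff S).mp hA
    by_cases hi : i ≤ 2 * d
    · have hc := word_take_count d S h2 i hi
      have hmono : (S.filter (· ≤ i + 1)).card ≤ (S.filter (· ≤ 2 * (i / 2 + 1))).card := by
        apply Finset.card_le_card
        apply Finset.monotone_filter_right
        intro x hx
        omega
      have hhalf := hF (i / 2)
      have hsum := count_U_add_count_D ((word d S).take i)
      rw [List.length_take, word_length] at hsum
      omega
    · rw [List.take_of_length_le (by rw [word_length]; omega)]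
      have hD := word_count_D d S h2 hub
      have hsum := count_U_add_count_D (word d S)
      rw [word_length] at hsum
      omega

lemma wordD_semilength (d : ℕ) (S : Finset ℕ) (hA : Admissible S) (hcard : S.card = d)
    (hub : ∀ s ∈ S, s ≤ 2 * d + 1) : (wordD d S hA hcard hub).semilength = d := by
  have h2 : ∀ s ∈ S, 2 ≤ s := fun s hs => by have := three_le_of_admissible hA hs; omega
  rw [DyckWord.semilength_eq_count_D]
  show (word d S).count D = d
  rw [word_count_D d S h2 hub, hcard]

/-- The inverse map: from a Dyck word to a set. -/
def setOf (d : ℕ) (p : DyckWord) : Finset ℕ :=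
  ((Finset.range (2 * d)).filter (fun j => p.toList.getD j U = D)).image (· + 2)

lemma mem_setOf (d : ℕ) (p : DyckWord) (x : ℕ) :
    x ∈ setOf d p ↔ ∃ j, j < 2 * d ∧ p.toList.getD j U = D ∧ j + 2 = x := by
  simp only [setOf, Finset.mem_image, Finset.mem_filter, Finset.mem_range]
  constructor
  · rintro ⟨j, ⟨hj, hD⟩, hx⟩; exact ⟨j, hj, hD, hx⟩
  · rintro ⟨j, hj, hD, hx⟩; exact ⟨j, ⟨hj, hD⟩, hx⟩

lemma setOf_two_le (d : ℕ) (p : DyckWord) : ∀ s ∈ setOf d p, 2 ≤ s := by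
  intro s hs
  rw [mem_setOf] at hs
  obtain ⟨j, _, _, hj⟩ := hs
  omega

variable {d : ℕ} {p : DyckWord}

lemma setOf_filter_card (hp : p.semilength = d) (m : ℕ) :
    ((setOf d p).filter (· ≤ m + 1)).card = (p.toList.take m).count D := by
  have hlen : p.toList.length = 2 * d := by
    rw [← DyckWord.two_mul_semilength_eq_length, hp]
  rw [← card_range_filter_mem (setOf d p) (setOf_two_le d p) m]
  have hset : (Finset.range m).filter (fun j => j + 2 ∈ setOf d p)
      = (Finset.range (min m (2 * d))).filter (fun j => p.toList.getD j U = D) := by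
    ext j
    simp only [Finset.mem_filter, Finset.mem_range, mem_setOf, lt_min_iff]
    constructor
    · rintro ⟨hj, j', hj', hD, he⟩
      have : j' = j := by omega
      subst this
      exact ⟨⟨hj, hj'⟩, hD⟩
    · rintro ⟨⟨hj, hj'⟩, hD⟩
      exact ⟨hj, j, hj', hD, rfl⟩
  rw [hset, card_filter_range_eq_count p.toList _ (by omega)]
  congr 1
  rw [List.take_eq_take_iff]
  omega

lemma setOf_card (hp : p.semilength = d) : (setOf d p).card = d := by
  have hlen : p.toList.length = 2 * d := by
    rw [← DyckWord.two_mul_semilength_eq_length, hp]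
  have h := setOf_filter_card hp (2 * d)
  rw [List.take_of_length_le (by omega)] at h
  have hfull : (setOf d p).filter (· ≤ 2 * d + 1) = setOf d p := by
    apply Finset.filter_true_of_mem
    intro s hs
    rw [mem_setOf] at hs
    obtain ⟨j, hj, _, he⟩ := hs
    omega
  rw [hfull] at h
  rw [h, ← DyckWord.semilength_eq_count_D, hp]

lemma setOf_admissible (hp : p.semilength = d) : Admissible (setOf d p) := by
  rw [admissible_iff]
  intro k
  have hlen : p.toList.length = 2 * d := by
    rw [← DyckWord.two_mul_semilength_eq_length, hp]
  have h : (2 * (k + 1)) = (2 * k + 1) + 1 := by omega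
  rw [h, setOf_filter_card hp (2 * k + 1)]
  have hle := p.count_D_le_count_U (2 * k + 1)
  have hsum := count_U_add_count_D (p.toList.take (2 * k + 1))
  rw [List.length_take] at hsum
  omega

lemma setOf_ub (hp : p.semilength = d) : ∀ s ∈ setOf d p, s ≤ 2 * d + 1 := by
  intro s hs
  rw [mem_setOf] at hs
  obtain ⟨j, hj, _, he⟩ := hs
  omega

lemma setOf_max_mem (hd : 0 < d) (hp : p.semilength = d) : 2 * d + 1 ∈ setOf d p := by
  have hlen : p.toList.length = 2 * d := by
    rw [← DyckWord.two_mul_semilength_eq_length, hp]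
  rw [mem_setOf]
  refine ⟨2 * d - 1, by omega, ?_, by omega⟩
  have hne : p.toList ≠ [] := by
    intro hnil
    rw [hnil] at hlen
    simp at hlen
    omega
  have hD := p.getLast_eq_D hne
  rw [List.getLast_eq_getElem] at hD
  rw [List.getD_eq_getElem _ _ (by omega)]
  rw [← hD]
  congr 1
  omega

lemma setOf_word (d : ℕ) (S : Finset ℕ) (hA : Admissible S) (hcard : S.card = d)
    (hub : ∀ s ∈ S, s ≤ 2 * d + 1) :
    setOf d (wordD d S hA hcard hub) = S := by
  ext x
  rw [mem_setOf]
  constructor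
  · rintro ⟨j, hj, hD, he⟩
    have hjl : j < (word d S).length := by rw [word_length]; omega
    rw [show (wordD d S hA hcard hub).toList = word d S from rfl] at hD
    rw [List.getD_eq_getElem _ _ hjl] at hD
    have hw : (word d S)[j] = if j + 2 ∈ S then D else U := by simp [word]
    rw [hw] at hD
    by_cases hmem : j + 2 ∈ S
    · rw [← he]; exact hmem
    · rw [if_neg hmem] at hD; exact absurd hD (by simp)
  · intro hx
    have h3 := three_le_of_admissible hA hx
    have hub' := hub x hx
    refine ⟨x - 2, by omega, ?_, by omega⟩
    have hjl : x - 2 < (word d S).length := by rw [word_length]; omega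
    rw [show (wordD d S hA hcard hub).toList = word d S from rfl]
    rw [List.getD_eq_getElem _ _ hjl]
    have hw : (word d S)[x-2] = if x - 2 + 2 ∈ S then D else U := by simp [word]
    rw [hw, if_pos (by rwa [show x - 2 + 2 = x by omega])]

lemma word_setOf (hp : p.semilength = d) : word d (setOf d p) = p.toList := by
  have hlen : p.toList.length = 2 * d := by
    rw [← DyckWord.two_mul_semilength_eq_length, hp]
  apply List.ext_getElem
  · rw [word_length, hlen]
  · intro j hj1 hj2
    rw [word_length] at hj1
    have hw : (word d (setOf d p))[j]'(by rw [word_length]; omega)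
        = if j + 2 ∈ setOf d p then D else U := by simp [word]
    rw [hw]
    have hmem : j + 2 ∈ setOf d p ↔ p.toList[j] = D := by
      rw [mem_setOf]
      constructor
      · rintro ⟨j', hj', hD, he⟩
        have : j' = j := by omega
        subst this
        rwa [List.getD_eq_getElem _ _ (by omega)] at hD
      · intro hD
        exact ⟨j, hj1, by rwa [List.getD_eq_getElem _ _ (by omega)], rfl⟩
    rcases (p.toList[j]).dichotomy with hU | hD
    · rw [hU, if_neg (by rw [hmem, hU]; simp)]
    · rw [hD, if_pos (hmem.mpr hD)]

end Stmt18Aux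

/-- For `n ≥ 2d+1`, the number of admissible pinnacle sets contained in `[n]` with
exactly `d` elements and maximum `2d+1` is the `d`-th Catalan number. -/
theorem stmt18 (n d : ℕ) (hd : 0 < d) (hn : 2 * d + 1 ≤ n) :
    Nat.card {S : Finset ℕ // S ⊆ Finset.Icc 1 n ∧ Admissible S ∧ S.card = d ∧
        (2 * d + 1) ∈ S ∧ ∀ s ∈ S, s ≤ 2 * d + 1} = catalan d := by
  open Stmt18Aux in
  have e : {S : Finset ℕ // S ⊆ Finset.Icc 1 n ∧ Admissible S ∧ S.card = d ∧
        (2 * d + 1) ∈ S ∧ ∀ s ∈ S, s ≤ 2 * d + 1} ≃ {p : DyckWord // p.semilength = d} :=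
    { toFun := fun S => ⟨wordD d S.1 S.2.2.1 S.2.2.2.1 S.2.2.2.2.2,
        wordD_semilength d S.1 S.2.2.1 S.2.2.2.1 S.2.2.2.2.2⟩
      invFun := fun p => ⟨setOf d p.1, by
        refine ⟨?_, setOf_admissible p.2, setOf_card p.2, setOf_max_mem hd p.2, setOf_ub p.2⟩
        intro s hs
        have h2 := setOf_two_le d p.1 s hs
        have hub := setOf_ub p.2 s hs
        rw [Finset.mem_Icc]
        omega⟩
      left_inv := fun S => Subtype.ext (setOf_word d S.1 S.2.2.1 S.2.2.2.1 S.2.2.2.2.2)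
      right_inv := fun p => Subtype.ext (DyckWord.ext
        (word_setOf (d := d) (p := p.1) p.2)) }
  rw [Nat.card_congr e, Nat.card_eq_fintype_card]
  exact DyckWord.card_dyckWord_semilength_eq_catalan d
end
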